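/- arXiv:0807.2752 — 5 statements merged into one kernel-verified Lean document; each statement's English description precedes it below -/
import Mathlib

section
/- Let ρ > 0, γ ∈ (0,1), h > 0, t > 0. For a Poisson random variable N with mean ρt, one has exp(γht/(1-γ)) · E[(1+h/ρ)^{-γN/(1-γ)}] ≤ exp(γ h² t / (2ρ(1-γ)²)). -/
open ProbabilityTheory Real
open Nat NNReal

private lemma bernoulli_neg {u q : ℝ} (hu : 0 ≤ u) (hq : 0 ≤ q) :
    1 - q * u ≤ (1 + u) ^ (-q) := by
  have h1u : (0:ℝ) < 1 + u := by linarith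
  rw [Real.rpow_def_of_pos h1u]
  have hlog : Real.log (1 + u) ≤ u := by
    have := Real.log_le_sub_one_of_pos h1u
    linarith
  have h1 : 1 + (-q * Real.log (1 + u)) ≤ Real.exp (-q * Real.log (1 + u)) := by
    have := Real.add_one_le_exp (-q * Real.log (1 + u)); linarith
  have h2 : q * Real.log (1 + u) ≤ q * u := mul_le_mul_of_nonneg_left hlog hq
  calc 1 - q * u ≤ 1 + (-q * Real.log (1 + u)) := by linarith
    _ ≤ Real.exp (-q * Real.log (1 + u)) := h1
    _ = Real.exp (Real.log (1 + u) * (-q)) := by ring_nf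

private lemma rpow_taylor_bound {c u : ℝ} (hc : 0 ≤ c) (hu : 0 ≤ u) :
    (1 + u) ^ (-c) ≤ 1 - c * u + c * (c + 1) * u ^ 2 / 2 := by
  set f : ℝ → ℝ := fun v => 1 - c * v + c * (c + 1) * v ^ 2 / 2 - (1 + v) ^ (-c) with hf
  have hder : ∀ v : ℝ, 0 ≤ v →
      HasDerivAt f (c * (c + 1) * v - c + c * (1 + v) ^ (-c - 1)) v := by
    intro v hv
    have h1v : (0:ℝ) < 1 + v := by linarith
    have hpoly : HasDerivAt (fun w : ℝ => 1 - c * w + c * (c + 1) * w ^ 2 / 2)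
        (0 - c * 1 + c * (c + 1) * (↑2 * v ^ (2 - 1)) / 2) v :=
      ((hasDerivAt_const v (1:ℝ)).sub ((hasDerivAt_id v).const_mul c)).add
        (((hasDerivAt_pow 2 v).const_mul (c * (c + 1))).div_const 2)
    have hrpow : HasDerivAt (fun w : ℝ => (1 + w) ^ (-c)) (1 * (-c) * (1 + v) ^ (-c - 1)) v :=
      ((hasDerivAt_id v).const_add 1).rpow_const (Or.inl h1v.ne')
    have := hpoly.sub hrpow
    refine this.congr_deriv ?_
    push_cast
    ring
  have hmono : MonotoneOn f (Set.Ici 0) := by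
    apply monotoneOn_of_deriv_nonneg (convex_Ici 0)
    · intro v hv
      exact ((hder v hv).continuousAt).continuousWithinAt
    · intro v hv
      rw [interior_Ici] at hv
      exact ((hder v (le_of_lt hv)).differentiableAt).differentiableWithinAt
    · intro v hv
      rw [interior_Ici] at hv
      rw [(hder v (le_of_lt hv)).deriv]
      have hb : 1 - (c + 1) * v ≤ (1 + v) ^ (-(c + 1)) :=
        bernoulli_neg (le_of_lt hv) (by linarith)
      have hrw : (1 + v) ^ (-(c + 1)) = (1 + v) ^ (-c - 1) := by ring_nf
      rw [hrw] at hb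
      nlinarith [(show (0:ℝ) < v from hv).le, mul_nonneg hc (show (0:ℝ) < v from hv).le]
  have h0 : f 0 ≤ f u := hmono (le_refl (0:ℝ)) hu hu
  have hf0 : f 0 = 0 := by
    simp [hf, Real.one_rpow]
  rw [hf0] at h0
  simp only [hf] at h0
  linarith

private lemma poisson_sum (ν x : ℝ) (hν : 0 ≤ ν) :
    ∑' n : ℕ, poissonPMFReal (Real.toNNReal ν) n * x ^ n = Real.exp (ν * (x - 1)) := by
  have hcoe : ((Real.toNNReal ν : NNReal) : ℝ) = ν := Real.coe_toNNReal ν hν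
  have hterm : ∀ n : ℕ, poissonPMFReal (Real.toNNReal ν) n * x ^ n
      = Real.exp (-ν) * ((ν * x) ^ n / (n ! : ℝ)) := by
    intro n
    rw [poissonPMFReal, hcoe, mul_pow]
    ring
  rw [tsum_congr hterm]
  rw [tsum_mul_left (a := Real.exp (-ν)) (f := fun n : ℕ => (ν * x) ^ n / (n ! : ℝ))]
  have hexp : ∑' n : ℕ, (ν * x) ^ n / (n ! : ℝ) = Real.exp (ν * x) := by
    rw [Real.exp_eq_exp_ℝ, NormedSpace.exp_eq_tsum_div]
  rw [hexp, ← Real.exp_add]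
  ring_nf

/-- Moment bound for the inverse Radon–Nikodym density when changing the jump
rate from `ρ` to `ρ + h`: for a Poisson random variable `N` of mean `ρ t`,
`exp(γht/(1-γ)) E[(1+h/ρ)^{-γN/(1-γ)}] ≤ exp(γ h² t / (2ρ(1-γ)²))`. -/
theorem poisson_density_moment_bound (ρ γ h t : ℝ) (hρ : 0 < ρ)
    (hγ0 : 0 < γ) (hγ1 : γ < 1) (hh : 0 < h) (ht : 0 < t) :
    Real.exp (γ * h * t / (1 - γ)) *
        ∑' n : ℕ, poissonPMFReal (Real.toNNReal (ρ * t)) n *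
          ((1 + h / ρ) ^ (-(γ / (1 - γ)))) ^ n
      ≤ Real.exp (γ * h ^ 2 * t / (2 * ρ * (1 - γ) ^ 2)) := by
  have hγ' : (0:ℝ) < 1 - γ := by linarith
  set c : ℝ := γ / (1 - γ) with hc
  set u : ℝ := h / ρ with hu
  have hc0 : 0 ≤ c := div_nonneg hγ0.le hγ'.le
  have hu0 : 0 ≤ u := div_nonneg hh.le hρ.le
  have hνt : 0 ≤ ρ * t := by positivity
  rw [poisson_sum (ρ * t) _ hνt, ← Real.exp_add]
  apply Real.exp_le_exp.mpr
  have htaylor : (1 + u) ^ (-c) ≤ 1 - c * u + c * (c + 1) * u ^ 2 / 2 :=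
    rpow_taylor_bound hc0 hu0
  have hmul : ρ * t * ((1 + u) ^ (-c) - 1) ≤ ρ * t * (- (c * u) + c * (c + 1) * u ^ 2 / 2) := by
    apply mul_le_mul_of_nonneg_left _ hνt
    linarith
  have hkey : γ * h * t / (1 - γ) + ρ * t * (- (c * u) + c * (c + 1) * u ^ 2 / 2)
      = γ * h ^ 2 * t / (2 * ρ * (1 - γ) ^ 2) := by
    rw [hc, hu]
    field_simp
    ring
  linarith
end

section
/- Let ι* = {0 = ι_0 < ι_1 < ι_2 < ...} be a renewal process on ℕ whose i.i.d. inter-arrival distribution K* satisfies ∑_{n≥1} K*(n) = 1 and K*(n) ~ C n^{-2} as n → ∞ for some C > 0. Then for any c > 0 and 0 < δ₁ < δ₂ < 1, N^{1-δ₂} · E[exp(-c N^{-δ₁} |ι* ∩ [0,N]|)] → 0 as N → ∞. -/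
open MeasureTheory ProbabilityTheory Filter

lemma harmonic_sum_le (N : ℕ) : ∑ t ∈ Finset.Icc 1 N, (t:ℝ)⁻¹ ≤ 1 + Real.log N := by
  have h := harmonic_le_one_add_log N
  rw [harmonic_eq_sum_Icc] at h
  calc ∑ t ∈ Finset.Icc 1 N, (t:ℝ)⁻¹ = ((∑ t ∈ Finset.Icc 1 N, (t:ℚ)⁻¹ : ℚ) : ℝ) := by
        push_cast; ring
    _ ≤ 1 + Real.log N := h

lemma tail_sq_sum_le {t : ℕ} (ht : 1 ≤ t) : ∑' j : ℕ, (((t + j : ℕ):ℝ) ^ 2)⁻¹ ≤ 2 / t := by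
  have hsum : Summable (fun j : ℕ => (((t + j : ℕ):ℝ) ^ 2)⁻¹) := by
    have := (summable_nat_add_iff (f := fun n : ℕ => (((n:ℕ):ℝ) ^ 2)⁻¹) t).2
      (Real.summable_nat_pow_inv.2 one_lt_two)
    refine this.congr fun j => by rw [add_comm]
  refine Summable.tsum_le_of_sum_le hsum ?_
  intro s
  obtain ⟨M, hM⟩ : ∃ M, s ⊆ Finset.range M := ⟨s.sup id + 1, fun x hx =>
    Finset.mem_range.2 (Nat.lt_succ_of_le (Finset.le_sup (f := id) hx))⟩
  calc ∑ j ∈ s, (((t + j : ℕ):ℝ) ^ 2)⁻¹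
      ≤ ∑ j ∈ Finset.range M, (((t + j : ℕ):ℝ) ^ 2)⁻¹ :=
        Finset.sum_le_sum_of_subset_of_nonneg hM (fun _ _ _ => by positivity)
    _ = ∑ i ∈ Finset.Ico t (t + M), (((i : ℕ):ℝ) ^ 2)⁻¹ := by
        rw [Finset.sum_Ico_eq_sum_range]; simp
    _ ≤ ∑ i ∈ Finset.Ioo (t-1) (t + M), (((i : ℕ):ℝ) ^ 2)⁻¹ := by
        refine Finset.sum_le_sum_of_subset_of_nonneg ?_ (fun _ _ _ => by positivity)
        intro i hi
        simp only [Finset.mem_Ico, Finset.mem_Ioo] at *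
        omega
    _ ≤ 2 / ((t-1 : ℕ) + 1) := by
        have := sum_Ioo_inv_sq_le (α := ℝ) (t-1) (t + M)
        simpa using this
    _ = 2 / t := by
        congr 1
        have : ((t - 1 : ℕ) : ℝ) = (t : ℝ) - 1 := by
          push_cast [Nat.cast_sub ht]; ring
        rw [this]; ring

lemma tail_decomp {Ω : Type*} [MeasurableSpace Ω] (μ : Measure Ω) [IsProbabilityMeasure μ]
    (X : Ω → ℕ) (hX : Measurable X) (t : ℕ) :
    (μ {ω | t ≤ X ω}).toReal = ∑' j : ℕ, (μ {ω | X ω = t + j}).toReal := by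
  have hset : {ω | t ≤ X ω} = ⋃ j : ℕ, {ω | X ω = t + j} := by
    ext ω
    simp only [Set.mem_setOf_eq, Set.mem_iUnion]
    constructor
    · intro h; exact ⟨X ω - t, by omega⟩
    · rintro ⟨j, hj⟩; omega
  have hdisj : Pairwise (Function.onFun Disjoint fun j : ℕ => {ω | X ω = t + j}) := by
    intro i j hij
    simp only [Function.onFun, Set.disjoint_left, Set.mem_setOf_eq]
    intro ω h1 h2
    omega
  rw [hset, measure_iUnion hdisj (fun j => by exact hX (measurableSet_singleton _)),
    ENNReal.tsum_toReal_eq (fun j => measure_ne_top μ _)]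

lemma tail_bound {Ω : Type*} [MeasurableSpace Ω] (μ : Measure Ω) [IsProbabilityMeasure μ]
    (X : Ω → ℕ) (hX : Measurable X)
    (K : ℕ → ℝ) (hK : ∀ n, (μ {ω | X ω = n}).toReal = K n)
    (C : ℝ) (hC : 0 < C)
    (hKtail : Tendsto (fun n : ℕ => K n * (n : ℝ) ^ 2) atTop (nhds C)) :
    ∃ C₁ : ℝ, 0 < C₁ ∧ ∀ t : ℕ, 1 ≤ t → (μ {ω | t ≤ X ω}).toReal ≤ C₁ / t := by
  have hKnonneg : ∀ n, 0 ≤ K n := fun n => (hK n) ▸ ENNReal.toReal_nonneg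
  obtain ⟨n₀, hn₀⟩ : ∃ n₀ : ℕ, ∀ n ≥ n₀, K n * (n:ℝ)^2 ≤ 2 * C := by
    have := hKtail.eventually (eventually_le_nhds (by linarith : C < 2 * C))
    exact eventually_atTop.1 this
  refine ⟨(n₀ : ℝ) + 4 * C + 1, by positivity, ?_⟩
  intro t ht
  rcases lt_or_ge t n₀ with hcase | hcase
  · -- small t : trivial bound by 1 ≤ n₀ / t
    have h1 : (μ {ω | t ≤ X ω}).toReal ≤ 1 := by
      rw [← ENNReal.toReal_one]
      exact ENNReal.toReal_mono ENNReal.one_ne_top prob_le_one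
    have ht' : (1:ℝ) ≤ (t:ℝ) := by exact_mod_cast ht
    have : (1:ℝ) ≤ ((n₀ : ℝ) + 4 * C + 1) / t := by
      rw [le_div_iff₀ (by linarith)]
      have : (t:ℝ) ≤ n₀ := by exact_mod_cast hcase.le
      nlinarith
    linarith
  · -- large t : use the tail sum
    have hKle : ∀ n : ℕ, n₀ ≤ n → 1 ≤ n → K n ≤ 2 * C * (((n:ℕ):ℝ)^2)⁻¹ := by
      intro n hn hn1
      have hpos : (0:ℝ) < (n:ℝ)^2 := by positivity
      have h2 : K n * (n:ℝ)^2 ≤ 2*C := hn₀ n hn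
      rw [mul_comm (2*C)  _, ← div_eq_inv_mul, le_div_iff₀ hpos]
      exact h2
    have hsummable : Summable (fun j : ℕ => (((t + j : ℕ):ℝ) ^ 2)⁻¹) := by
      have := (summable_nat_add_iff (f := fun n : ℕ => (((n:ℕ):ℝ) ^ 2)⁻¹) t).2
        (Real.summable_nat_pow_inv.2 one_lt_two)
      exact this.congr fun j => by rw [add_comm]
    have hsummable2 : Summable (fun j : ℕ => 2 * C * (((t + j : ℕ):ℝ) ^ 2)⁻¹) :=
      hsummable.mul_left _
    have hsummableK : Summable (fun j : ℕ => K (t + j)) := by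
      refine Summable.of_nonneg_of_le (fun j => hKnonneg _) (fun j => ?_) hsummable2
      exact hKle (t+j) (by omega) (by omega)
    calc (μ {ω | t ≤ X ω}).toReal = ∑' j : ℕ, K (t + j) := by
          rw [tail_decomp μ X hX t]; exact tsum_congr fun j => hK _
      _ ≤ ∑' j : ℕ, 2 * C * (((t + j : ℕ):ℝ) ^ 2)⁻¹ :=
          Summable.tsum_le_tsum (fun j => hKle (t+j) (by omega) (by omega)) hsummableK hsummable2
      _ = 2 * C * ∑' j : ℕ, (((t + j : ℕ):ℝ) ^ 2)⁻¹ := tsum_mul_left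
      _ ≤ 2 * C * (2 / t) := by
          exact mul_le_mul_of_nonneg_left (tail_sq_sum_le ht) (by positivity)
      _ ≤ ((n₀ : ℝ) + 4 * C + 1) / t := by
          have htpos : (0:ℝ) < (t:ℝ) := by exact_mod_cast ht
          have : 2 * C * (2 / (t:ℝ)) = (4 * C) / t := by ring
          rw [this]
          gcongr
          linarith [Nat.cast_nonneg (α := ℝ) n₀]

lemma layer_cake {Ω : Type*} [MeasurableSpace Ω] (μ : Measure Ω) [IsProbabilityMeasure μ]
    (X : Ω → ℕ) (hX : Measurable X) (N : ℕ) :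
    ∫ ω, ((min (X ω) N : ℕ) : ℝ) ∂μ = ∑ t ∈ Finset.Icc 1 N, (μ {ω | t ≤ X ω}).toReal := by
  have hmeas : ∀ t : ℕ, MeasurableSet {ω | t ≤ X ω} := fun t => by
    exact hX (measurableSet_Ici (a := t))
  have key : ∀ ω, ((min (X ω) N : ℕ) : ℝ)
      = ∑ t ∈ Finset.Icc 1 N, ({ω | t ≤ X ω}).indicator (1 : Ω → ℝ) ω := by
    intro ω
    have : ∀ t, ({ω | t ≤ X ω}).indicator (1 : Ω → ℝ) ω = if t ≤ X ω then 1 else 0 := by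
      intro t; simp [Set.indicator_apply]
    simp_rw [this]
    rw [Finset.sum_boole]
    congr 1
    have : (Finset.Icc 1 N).filter (fun t => t ≤ X ω) = Finset.Icc 1 (min (X ω) N) := by
      ext a
      simp only [Finset.mem_filter, Finset.mem_Icc]
      omega
    rw [this, Nat.card_Icc]
    omega
  calc ∫ ω, ((min (X ω) N : ℕ) : ℝ) ∂μ
      = ∫ ω, ∑ t ∈ Finset.Icc 1 N, ({ω | t ≤ X ω}).indicator (1 : Ω → ℝ) ω ∂μ := by
        exact integral_congr_ae (Filter.Eventually.of_forall key)
    _ = ∑ t ∈ Finset.Icc 1 N, ∫ ω, ({ω | t ≤ X ω}).indicator (1 : Ω → ℝ) ω ∂μ := by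
        exact integral_finset_sum _ (fun t _ => (integrable_const (1:ℝ)).indicator (hmeas t))
    _ = ∑ t ∈ Finset.Icc 1 N, (μ {ω | t ≤ X ω}).toReal := by
        exact Finset.sum_congr rfl (fun t _ => integral_indicator_one (hmeas t))

set_option maxHeartbeats 1000000 in
/-- Renewal process estimate (Proposition A.2, case `α = 1`):
if the i.i.d. inter-arrival distribution `K` on `ℕ` satisfies `∑_{n≥1} K n = 1`
and `K n ~ C n^{-2}`, then for any `c > 0` and `0 < δ₁ < δ₂ < 1`,
`N^{1-δ₂} E[exp(-c N^{-δ₁} |ι* ∩ [0,N]|)] → 0` as `N → ∞`, where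
`|ι* ∩ [0,N]|` is the number of renewal epochs `ι_k = U_1 + ⋯ + U_k ≤ N`. -/
theorem renewal_fractional_decay
    {Ω : Type*} [MeasurableSpace Ω] (μ : Measure Ω) [IsProbabilityMeasure μ]
    (U : ℕ → Ω → ℕ) (hmeas : ∀ i, Measurable (U i))
    (hindep : iIndepFun U μ)
    (hident : ∀ i, Measure.map (U i) μ = Measure.map (U 0) μ)
    (K : ℕ → ℝ) (hK : ∀ n, (μ {ω | U 0 ω = n}).toReal = K n)
    (hK0 : K 0 = 0) (hKsum : ∑' n, K n = 1)
    (C : ℝ) (hC : 0 < C)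
    (hKtail : Tendsto (fun n : ℕ => K n * (n : ℝ) ^ 2) atTop (nhds C))
    (c δ₁ δ₂ : ℝ) (hc : 0 < c) (h1 : 0 < δ₁) (h12 : δ₁ < δ₂) (h2 : δ₂ < 1) :
    Tendsto
      (fun N : ℕ => (N : ℝ) ^ (1 - δ₂) *
        ∫ ω, Real.exp (-c * (N : ℝ) ^ (-δ₁) *
          (((Finset.range (N + 1)).filter
            (fun k => ∑ i ∈ Finset.range k, U i ω ≤ N)).card : ℝ)) ∂μ)
      atTop (nhds 0) := by
  obtain ⟨C₁, hC₁pos, hC₁⟩ := tail_bound μ (U 0) (hmeas 0) K hK C hC hKtail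
  set δ : ℝ := (δ₁ + δ₂) / 2 with hδdef
  have hδ1 : δ₁ < δ := by rw [hδdef]; linarith
  have hδ2 : δ < δ₂ := by rw [hδdef]; linarith
  have hδpos : 0 < δ := by linarith
  have hδlt1 : δ < 1 := by linarith
  -- the dominating function
  set G : ℕ → ℝ := fun N =>
    (N:ℝ)^(1-δ₂) * Real.exp (-c * (N:ℝ)^(δ-δ₁))
      + 2*C₁*(N:ℝ)^(δ-δ₂) + 2*C₁*(N:ℝ)^(δ-δ₂)*(1 + Real.log N) with hGdef
  -- main estimate
  have main : ∀ N : ℕ, 1 ≤ N →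
      (N : ℝ) ^ (1 - δ₂) *
        (∫ ω, Real.exp (-c * (N : ℝ) ^ (-δ₁) *
          (((Finset.range (N + 1)).filter
            (fun k => ∑ i ∈ Finset.range k, U i ω ≤ N)).card : ℝ)) ∂μ) ≤ G N := by
    intro N hN
    have hNR : (1:ℝ) ≤ (N:ℝ) := by exact_mod_cast hN
    have hNpos : (0:ℝ) < (N:ℝ) := by linarith
    set m : ℕ := ⌈(N:ℝ)^δ⌉₊ with hmdef
    have hm1 : 1 ≤ m := Nat.one_le_iff_ne_zero.2 (by
      have : (0:ℝ) < (N:ℝ)^δ := Real.rpow_pos_of_pos hNpos δ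
      simp [hmdef, Nat.ceil_eq_zero, not_le, this])
    have hNδ1 : (1:ℝ) ≤ (N:ℝ)^δ := Real.one_le_rpow hNR hδpos.le
    have hmN : m ≤ N := by
      rw [hmdef, Nat.ceil_le]
      calc (N:ℝ)^δ ≤ (N:ℝ)^(1:ℝ) := Real.rpow_le_rpow_of_exponent_le hNR hδlt1.le
        _ = N := Real.rpow_one _
    have hmub : (m:ℝ) ≤ 2*(N:ℝ)^δ := by
      have h := Nat.ceil_lt_add_one (Real.rpow_nonneg hNpos.le δ)
      have : (m:ℝ) < (N:ℝ)^δ + 1 := by exact_mod_cast h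
      linarith
    have hmlb : (N:ℝ)^δ ≤ (m:ℝ) + 1 := (Nat.le_ceil _).trans (by linarith)
    -- the sum of truncated variables
    set S : Ω → ℝ := fun ω => ∑ i ∈ Finset.range m, ((min (U i ω) N : ℕ) : ℝ) with hSdef
    have hSmeas : Measurable S := by
      apply Finset.measurable_sum
      intro i _
      exact (measurable_from_nat (f := fun n : ℕ => ((min n N : ℕ) : ℝ))).comp (hmeas i)
    have hSint : Integrable S μ := by
      apply Integrable.mono' (integrable_const ((m:ℝ) * N)) hSmeas.aestronglyMeasurable
      refine Filter.Eventually.of_forall fun ω => ?_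
      rw [Real.norm_eq_abs, abs_of_nonneg (Finset.sum_nonneg fun i _ => by positivity)]
      calc S ω ≤ ∑ i ∈ Finset.range m, (N:ℝ) := by
            apply Finset.sum_le_sum
            intro i _
            exact_mod_cast min_le_right (U i ω) N
        _ = (m:ℝ) * N := by simp [mul_comm]
    -- bad events
    set B₁ : Set Ω := ⋃ i ∈ Finset.range m, {ω | N + 1 ≤ U i ω} with hB₁def
    set B₂ : Set Ω := {ω | (N:ℝ) + 1 ≤ S ω} with hB₂def
    have hB₁meas : MeasurableSet B₁ :=
      MeasurableSet.biUnion (Finset.range m).countable_toSet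
        (fun i _ => by exact (hmeas i) (measurableSet_Ici (a := N+1)))
    have hB₂meas : MeasurableSet B₂ := measurableSet_le measurable_const hSmeas
    set B : Set Ω := B₁ ∪ B₂ with hBdef
    have hBmeas : MeasurableSet B := hB₁meas.union hB₂meas
    -- pointwise bound
    have hpoint : ∀ ω, Real.exp (-c * (N : ℝ) ^ (-δ₁) *
          (((Finset.range (N + 1)).filter
            (fun k => ∑ i ∈ Finset.range k, U i ω ≤ N)).card : ℝ))
        ≤ Real.exp (-c * (N:ℝ)^(-δ₁) * ((m:ℝ)+1)) + B.indicator (1 : Ω → ℝ) ω := by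
      intro ω
      generalize hcnt : ((Finset.range (N + 1)).filter
            (fun k => ∑ i ∈ Finset.range k, U i ω ≤ N)).card = n
      by_cases hc2 : n ≤ m
      · -- ω ∈ B
        have hι : N < ∑ i ∈ Finset.range m, U i ω := by
          by_contra hcon
          push_neg at hcon
          have hsub : Finset.range (m+1) ⊆ (Finset.range (N + 1)).filter
              (fun k => ∑ i ∈ Finset.range k, U i ω ≤ N) := by
            intro k hk
            rw [Finset.mem_range] at hk
            rw [Finset.mem_filter, Finset.mem_range]
            constructor
            · omega
            · calc ∑ i ∈ Finset.range k, U i ω ≤ ∑ i ∈ Finset.range m, U i ω :=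
                    Finset.sum_le_sum_of_subset (Finset.range_subset_range.2 (by omega))
                _ ≤ N := hcon
          have hcard := Finset.card_le_card hsub
          rw [Finset.card_range, hcnt] at hcard
          omega
        have hωB : ω ∈ B := by
          by_cases hU : ∀ i ∈ Finset.range m, U i ω ≤ N
          · right
            have hSeq : S ω = ((∑ i ∈ Finset.range m, U i ω : ℕ) : ℝ) := by
              simp only [hSdef]
              have heq2 : ∑ i ∈ Finset.range m, ((min (U i ω) N : ℕ) : ℝ)
                  = ∑ i ∈ Finset.range m, ((U i ω : ℕ) : ℝ) :=
                Finset.sum_congr rfl fun i hi => by rw [min_eq_left (hU i hi)]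
              rw [heq2]
              push_cast
              ring
            show (N:ℝ) + 1 ≤ S ω
            rw [hSeq]
            exact_mod_cast Nat.succ_le_of_lt hι
          · left
            push_neg at hU
            obtain ⟨i, hi, hUi⟩ := hU
            exact Set.mem_biUnion hi (show ω ∈ {ω | N + 1 ≤ U i ω} by
              simp only [Set.mem_setOf_eq]; omega)
        rw [Set.indicator_of_mem hωB]
        have hexp1 : Real.exp (-c * (N : ℝ) ^ (-δ₁) * (n:ℝ)) ≤ 1 := by
          rw [Real.exp_le_one_iff]
          have h0 : (0:ℝ) ≤ c * (N : ℝ) ^ (-δ₁) * (n:ℝ) :=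
            mul_nonneg (mul_nonneg hc.le (Real.rpow_nonneg hNpos.le _)) (Nat.cast_nonneg n)
          nlinarith
        have := (Real.exp_pos (-c * (N:ℝ)^(-δ₁) * ((m:ℝ)+1))).le
        simp only [Pi.one_apply]
        linarith
      · push_neg at hc2
        have hcast : ((m:ℝ)+1) ≤ (n:ℝ) := by exact_mod_cast hc2
        have hfac : -c * (N:ℝ)^(-δ₁) ≤ 0 := by
          have : (0:ℝ) < (N:ℝ)^(-δ₁) := Real.rpow_pos_of_pos hNpos _
          nlinarith
        have hmm := mul_le_mul_of_nonpos_left hcast hfac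
        have h2 : Real.exp (-c * (N : ℝ) ^ (-δ₁) * (n:ℝ))
            ≤ Real.exp (-c * (N:ℝ)^(-δ₁) * ((m:ℝ)+1)) := Real.exp_le_exp.2 hmm
        have h3 : (0:ℝ) ≤ B.indicator (1 : Ω → ℝ) ω :=
          Set.indicator_nonneg (fun _ _ => zero_le_one) ω
        linarith
    -- integral bound
    have hint : (∫ ω, Real.exp (-c * (N : ℝ) ^ (-δ₁) *
          (((Finset.range (N + 1)).filter
            (fun k => ∑ i ∈ Finset.range k, U i ω ≤ N)).card : ℝ)) ∂μ)
        ≤ Real.exp (-c * (N:ℝ)^(-δ₁) * ((m:ℝ)+1)) + (μ B).toReal := by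
      have hgint : Integrable (fun ω => Real.exp (-c * (N:ℝ)^(-δ₁) * ((m:ℝ)+1))
          + B.indicator (1 : Ω → ℝ) ω) μ :=
        (integrable_const _).add ((integrable_const (1:ℝ)).indicator hBmeas)
      calc (∫ ω, Real.exp (-c * (N : ℝ) ^ (-δ₁) *
          (((Finset.range (N + 1)).filter
            (fun k => ∑ i ∈ Finset.range k, U i ω ≤ N)).card : ℝ)) ∂μ)
          ≤ ∫ ω, (Real.exp (-c * (N:ℝ)^(-δ₁) * ((m:ℝ)+1))
              + B.indicator (1 : Ω → ℝ) ω) ∂μ := by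
            apply integral_mono_of_nonneg
              (Filter.Eventually.of_forall fun ω => (Real.exp_pos _).le) hgint
              (Filter.Eventually.of_forall hpoint)
        _ = Real.exp (-c * (N:ℝ)^(-δ₁) * ((m:ℝ)+1)) + (μ B).toReal := by
            have hind_int : Integrable (B.indicator (1 : Ω → ℝ)) μ :=
              (integrable_const (1:ℝ)).indicator hBmeas
            rw [integral_add (integrable_const _) hind_int, integral_const,
              integral_indicator_one hBmeas]
            simp
            rfl
    -- bound on μ B₁
    have hident' : ∀ i (s : Set ℕ), μ (U i ⁻¹' s) = μ (U 0 ⁻¹' s) := by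
      intro i s
      rw [← Measure.map_apply (hmeas i) (MeasurableSet.of_discrete),
        hident i, Measure.map_apply (hmeas 0) (MeasurableSet.of_discrete)]
    have hB₁bound : (μ B₁).toReal ≤ (m:ℝ) * (C₁ / N) := by
      have h1 : μ B₁ ≤ ∑ i ∈ Finset.range m, μ {ω | N + 1 ≤ U i ω} :=
        measure_biUnion_finset_le _ _
      have h2 : (μ B₁).toReal ≤ ∑ i ∈ Finset.range m, (μ {ω | N + 1 ≤ U i ω}).toReal := by
        rw [← ENNReal.toReal_sum (fun i _ => measure_ne_top μ _)]
        exact ENNReal.toReal_mono (by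
          exact (ENNReal.sum_lt_top.2 fun i _ => measure_lt_top μ _).ne) h1
      refine h2.trans ?_
      have h3 : ∀ i, (μ {ω | N + 1 ≤ U i ω}).toReal ≤ C₁ / N := by
        intro i
        have : {ω | N + 1 ≤ U i ω} = U i ⁻¹' {n | N + 1 ≤ n} := rfl
        rw [this, hident' i]
        have h4 := hC₁ (N+1) (by omega)
        have : (U 0 ⁻¹' {n | N + 1 ≤ n}) = {ω | N + 1 ≤ U 0 ω} := rfl
        rw [this]
        refine h4.trans ?_
        gcongr
        · push_cast; linarith
      calc ∑ i ∈ Finset.range m, (μ {ω | N + 1 ≤ U i ω}).toReal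
          ≤ ∑ i ∈ Finset.range m, (C₁ / N) := Finset.sum_le_sum fun i _ => h3 i
        _ = (m:ℝ) * (C₁ / N) := by simp [mul_comm]
    -- bound on μ B₂ via Markov
    have hEmin : ∫ ω, ((min (U 0 ω) N : ℕ) : ℝ) ∂μ ≤ C₁ * (1 + Real.log N) := by
      rw [layer_cake μ (U 0) (hmeas 0) N]
      calc ∑ t ∈ Finset.Icc 1 N, (μ {ω | t ≤ U 0 ω}).toReal
          ≤ ∑ t ∈ Finset.Icc 1 N, C₁ / t := by
            apply Finset.sum_le_sum
            intro t ht
            rw [Finset.mem_Icc] at ht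
            exact hC₁ t ht.1
        _ = C₁ * ∑ t ∈ Finset.Icc 1 N, (t:ℝ)⁻¹ := by
            rw [Finset.mul_sum]
            exact Finset.sum_congr rfl fun t _ => by rw [div_eq_mul_inv]
        _ ≤ C₁ * (1 + Real.log N) :=
            mul_le_mul_of_nonneg_left (harmonic_sum_le N) hC₁pos.le
    have hES : ∫ ω, S ω ∂μ ≤ (m:ℝ) * (C₁ * (1 + Real.log N)) := by
      have heq : ∫ ω, S ω ∂μ = ∑ i ∈ Finset.range m, ∫ ω, ((min (U i ω) N : ℕ) : ℝ) ∂μ := by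
        rw [hSdef]
        refine integral_finset_sum _ (fun i _ => ?_)
        have hmi : Measurable (fun ω => ((min (U i ω) N : ℕ) : ℝ)) :=
          (measurable_from_nat (f := fun n : ℕ => ((min n N : ℕ) : ℝ))).comp (hmeas i)
        apply Integrable.mono' (integrable_const ((N:ℕ):ℝ)) hmi.aestronglyMeasurable
        refine Filter.Eventually.of_forall fun ω => ?_
        rw [Real.norm_eq_abs, abs_of_nonneg (Nat.cast_nonneg _)]
        exact_mod_cast min_le_right (U i ω) N
      rw [heq]
      have hid : ∀ i, ∫ ω, ((min (U i ω) N : ℕ) : ℝ) ∂μ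
          = ∫ ω, ((min (U 0 ω) N : ℕ) : ℝ) ∂μ := by
        intro i
        have hfm : Measurable (fun n : ℕ => ((min n N : ℕ) : ℝ)) := measurable_from_nat
        rw [← integral_map (φ := U i) (f := fun n : ℕ => ((min n N : ℕ) : ℝ))
            (hmeas i).aemeasurable hfm.aestronglyMeasurable, hident i,
          integral_map (φ := U 0) (f := fun n : ℕ => ((min n N : ℕ) : ℝ))
            (hmeas 0).aemeasurable hfm.aestronglyMeasurable]
      calc ∑ i ∈ Finset.range m, ∫ ω, ((min (U i ω) N : ℕ) : ℝ) ∂μ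
          = ∑ i ∈ Finset.range m, ∫ ω, ((min (U 0 ω) N : ℕ) : ℝ) ∂μ :=
            Finset.sum_congr rfl fun i _ => hid i
        _ = (m:ℝ) * ∫ ω, ((min (U 0 ω) N : ℕ) : ℝ) ∂μ := by simp [mul_comm]
        _ ≤ (m:ℝ) * (C₁ * (1 + Real.log N)) := by
            apply mul_le_mul_of_nonneg_left hEmin (by positivity)
    have hB₂bound : (μ B₂).toReal ≤ (m:ℝ) * (C₁ * (1 + Real.log N)) / N := by
      have hmarkov := mul_meas_ge_le_integral_of_nonneg
        (μ := μ) (f := S)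
        (Filter.Eventually.of_forall fun ω => Finset.sum_nonneg fun i _ => by positivity)
        hSint ((N:ℝ)+1)
      have hsetEq : {x | (N:ℝ)+1 ≤ S x} = B₂ := rfl
      rw [hsetEq] at hmarkov
      have hN1pos : (0:ℝ) < (N:ℝ)+1 := by linarith
      have h5 : (μ B₂).toReal ≤ (∫ ω, S ω ∂μ) / ((N:ℝ)+1) := by
        rw [le_div_iff₀ hN1pos]
        change ((N:ℝ) + 1) * (μ B₂).toReal ≤ _ at hmarkov
        linarith [hmarkov]
      refine h5.trans ?_
      have hlog : 0 ≤ Real.log N := Real.log_nonneg hNR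
      calc (∫ ω, S ω ∂μ)/((N:ℝ)+1)
          ≤ ((m:ℝ)*(C₁*(1+Real.log N)))/((N:ℝ)+1) := by gcongr
        _ ≤ ((m:ℝ)*(C₁*(1+Real.log N)))/(N:ℝ) := by
            apply div_le_div_of_nonneg_left ?_ hNpos (by linarith)
            exact mul_nonneg (Nat.cast_nonneg m) (by nlinarith)
    -- put everything together
    have hlog : 0 ≤ Real.log N := Real.log_nonneg hNR
    have hexpand : (N:ℝ)^(δ-δ₁) = (N:ℝ)^δ * (N:ℝ)^(-δ₁) := by
      rw [sub_eq_add_neg, Real.rpow_add hNpos]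
    have e1 : (N:ℝ)^δ / (N:ℝ) = (N:ℝ)^(δ-(1:ℝ)) := by
      rw [Real.rpow_sub hNpos, Real.rpow_one]
    have e2 : (N:ℝ)^(1-δ₂) * (N:ℝ)^(δ-(1:ℝ)) = (N:ℝ)^(δ-δ₂) := by
      rw [← Real.rpow_add hNpos]
      congr 1
      ring
    have ha : (N:ℝ)^(1-δ₂) * Real.exp (-c * (N:ℝ)^(-δ₁) * ((m:ℝ)+1))
        ≤ (N:ℝ)^(1-δ₂) * Real.exp (-c * (N:ℝ)^(δ-δ₁)) := by
      apply mul_le_mul_of_nonneg_left ?_ (Real.rpow_nonneg hNpos.le _)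
      apply Real.exp_le_exp.2
      rw [hexpand]
      have hpow : (0:ℝ) < (N:ℝ)^(-δ₁) := Real.rpow_pos_of_pos hNpos _
      have h8 := mul_le_mul_of_nonneg_left hmlb (mul_nonneg hc.le hpow.le)
      nlinarith [h8]
    have hb : (N:ℝ)^(1-δ₂) * ((m:ℝ)*(C₁/N)) ≤ 2*C₁*(N:ℝ)^(δ-δ₂) := by
      calc (N:ℝ)^(1-δ₂) * ((m:ℝ)*(C₁/N))
          ≤ (N:ℝ)^(1-δ₂) * ((2*(N:ℝ)^δ)*(C₁/N)) := by
            apply mul_le_mul_of_nonneg_left ?_ (Real.rpow_nonneg hNpos.le _)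
            apply mul_le_mul_of_nonneg_right hmub (by positivity)
        _ = 2*C₁*((N:ℝ)^(1-δ₂) * ((N:ℝ)^δ/(N:ℝ))) := by ring
        _ = 2*C₁*(N:ℝ)^(δ-δ₂) := by rw [e1, e2]
    have hcc : (N:ℝ)^(1-δ₂) * ((m:ℝ)*(C₁*(1+Real.log N))/N) ≤ 2*C₁*(N:ℝ)^(δ-δ₂)*(1+Real.log N) := by
      have h9 : (0:ℝ) ≤ 1 + Real.log N := by linarith
      calc (N:ℝ)^(1-δ₂) * ((m:ℝ)*(C₁*(1+Real.log N))/N)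
          = ((N:ℝ)^(1-δ₂) * ((m:ℝ)*(C₁/N))) * (1+Real.log N) := by ring
        _ ≤ (2*C₁*(N:ℝ)^(δ-δ₂)) * (1+Real.log N) := mul_le_mul_of_nonneg_right hb h9
        _ = 2*C₁*(N:ℝ)^(δ-δ₂)*(1+Real.log N) := by ring
    have hμB : (μ B).toReal ≤ (μ B₁).toReal + (μ B₂).toReal := by
      calc (μ B).toReal ≤ ((μ B₁) + (μ B₂)).toReal :=
            ENNReal.toReal_mono
              (ENNReal.add_ne_top.2 ⟨measure_ne_top μ _, measure_ne_top μ _⟩)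
              (measure_union_le _ _)
        _ = (μ B₁).toReal + (μ B₂).toReal :=
            ENNReal.toReal_add (measure_ne_top μ _) (measure_ne_top μ _)
    have hNpownn : (0:ℝ) ≤ (N:ℝ)^(1-δ₂) := Real.rpow_nonneg hNpos.le _
    calc (N : ℝ) ^ (1 - δ₂) *
        (∫ ω, Real.exp (-c * (N : ℝ) ^ (-δ₁) *
          (((Finset.range (N + 1)).filter
            (fun k => ∑ i ∈ Finset.range k, U i ω ≤ N)).card : ℝ)) ∂μ)
        ≤ (N:ℝ)^(1-δ₂) * (Real.exp (-c * (N:ℝ)^(-δ₁) * ((m:ℝ)+1))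
            + ((m:ℝ)*(C₁/N) + (m:ℝ)*(C₁*(1+Real.log N))/N)) := by
          apply mul_le_mul_of_nonneg_left ?_ hNpownn
          have := hint
          linarith [hB₁bound, hB₂bound, hμB]
      _ = (N:ℝ)^(1-δ₂) * Real.exp (-c * (N:ℝ)^(-δ₁) * ((m:ℝ)+1))
            + ((N:ℝ)^(1-δ₂) * ((m:ℝ)*(C₁/N))
            + (N:ℝ)^(1-δ₂) * ((m:ℝ)*(C₁*(1+Real.log N))/N)) := by ring
      _ ≤ G N := by
          rw [hGdef]
          dsimp only
          linarith [ha, hb, hcc]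
  -- limits
  have hε : (0:ℝ) < δ - δ₁ := by linarith
  have hη : (0:ℝ) < δ₂ - δ := by linarith
  have hnat : Tendsto (fun N : ℕ => (N:ℝ)) atTop atTop := tendsto_natCast_atTop_atTop
  have g1 : Tendsto (fun N : ℕ => (N:ℝ)^(1-δ₂) * Real.exp (-c * (N:ℝ)^(δ-δ₁)))
      atTop (nhds 0) := by
    have base := tendsto_rpow_mul_exp_neg_mul_atTop_nhds_zero ((1-δ₂)/(δ-δ₁)) c hc
    have comp1 : Tendsto (fun N : ℕ => (N:ℝ)^(δ-δ₁)) atTop atTop :=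
      (tendsto_rpow_atTop hε).comp hnat
    refine (base.comp comp1).congr' ?_
    filter_upwards [eventually_ge_atTop 1] with N hN
    have hNpos : (0:ℝ) < (N:ℝ) := by exact_mod_cast hN
    show ((N:ℝ)^(δ-δ₁))^((1-δ₂)/(δ-δ₁)) * Real.exp (-c * (N:ℝ)^(δ-δ₁)) = _
    rw [← Real.rpow_mul hNpos.le]
    congr 2
    field_simp
  have g2 : Tendsto (fun N : ℕ => 2*C₁*(N:ℝ)^(δ-δ₂)) atTop (nhds 0) := by
    have hrw : (δ - δ₂ : ℝ) = -(δ₂ - δ) := by ring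
    have base : Tendsto (fun x : ℝ => x^(-(δ₂-δ))) atTop (nhds 0) := tendsto_rpow_neg_atTop hη
    have comp2 : Tendsto (fun N : ℕ => (N:ℝ)^(δ-δ₂)) atTop (nhds 0) := by
      rw [hrw]; exact base.comp hnat
    have := comp2.const_mul (2*C₁)
    simpa using this
  have g3 : Tendsto (fun N : ℕ => 2*C₁*(N:ℝ)^(δ-δ₂)*(1+Real.log N)) atTop (nhds 0) := by
    have hbd : ∀ᶠ N : ℕ in atTop, 2*C₁*(N:ℝ)^(δ-δ₂)*(1+Real.log N)
        ≤ 2*C₁*((N:ℝ)^(-(δ₂-δ)) + (2/(δ₂-δ))*(N:ℝ)^(-((δ₂-δ)/2))) := by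
      filter_upwards [eventually_ge_atTop 1] with N hN
      have hNR : (1:ℝ) ≤ (N:ℝ) := by exact_mod_cast hN
      have hNpos : (0:ℝ) < (N:ℝ) := by linarith
      have hlogle : Real.log N ≤ (N:ℝ)^((δ₂-δ)/2) / ((δ₂-δ)/2) :=
        Real.log_le_rpow_div hNpos.le (by linarith)
      have hmulrw : (N:ℝ)^(δ-δ₂) * (N:ℝ)^((δ₂-δ)/2) = (N:ℝ)^(-((δ₂-δ)/2)) := by
        rw [← Real.rpow_add hNpos]
        congr 1
        ring
      have hrw2 : (N:ℝ)^(δ-δ₂) = (N:ℝ)^(-(δ₂-δ)) := by congr 1; ring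
      have hpownn : (0:ℝ) ≤ (N:ℝ)^(δ-δ₂) := Real.rpow_nonneg hNpos.le _
      have key : (N:ℝ)^(δ-δ₂)*(1+Real.log N)
          ≤ (N:ℝ)^(-(δ₂-δ)) + (2/(δ₂-δ))*(N:ℝ)^(-((δ₂-δ)/2)) := by
        have h1' : (N:ℝ)^(δ-δ₂)*(1+Real.log N)
            = (N:ℝ)^(δ-δ₂) + (N:ℝ)^(δ-δ₂)*Real.log N := by ring
        have h2' : (N:ℝ)^(δ-δ₂)*Real.log N
            ≤ (N:ℝ)^(δ-δ₂)*((N:ℝ)^((δ₂-δ)/2) / ((δ₂-δ)/2)) :=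
          mul_le_mul_of_nonneg_left hlogle hpownn
        have h3' : (N:ℝ)^(δ-δ₂)*((N:ℝ)^((δ₂-δ)/2) / ((δ₂-δ)/2))
            = (2/(δ₂-δ))*(N:ℝ)^(-((δ₂-δ)/2)) := by
          have hne : (δ₂-δ) ≠ 0 := ne_of_gt hη
          rw [div_eq_mul_inv ((N:ℝ)^((δ₂-δ)/2)), ← mul_assoc, hmulrw]
          rw [mul_comm]
          congr 1
          field_simp
        rw [h1', ← hrw2]
        linarith [h2', h3'.le]
      calc 2*C₁*(N:ℝ)^(δ-δ₂)*(1+Real.log N) = 2*C₁*((N:ℝ)^(δ-δ₂)*(1+Real.log N)) := by ring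
        _ ≤ 2*C₁*((N:ℝ)^(-(δ₂-δ)) + (2/(δ₂-δ))*(N:ℝ)^(-((δ₂-δ)/2))) := by
            apply mul_le_mul_of_nonneg_left key (by positivity)
    have hnn : ∀ᶠ N : ℕ in atTop, 0 ≤ 2*C₁*(N:ℝ)^(δ-δ₂)*(1+Real.log N) := by
      filter_upwards [eventually_ge_atTop 1] with N hN
      have hNR : (1:ℝ) ≤ (N:ℝ) := by exact_mod_cast hN
      have hlog : (0:ℝ) ≤ Real.log N := Real.log_nonneg hNR
      have h0' : (0:ℝ) ≤ (N:ℝ)^(δ-δ₂) := Real.rpow_nonneg (by linarith) _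
      have := mul_nonneg (mul_nonneg (by linarith : (0:ℝ) ≤ 2*C₁) h0')
        (by linarith : (0:ℝ) ≤ 1+Real.log N)
      linarith
    have hlim : Tendsto (fun N : ℕ => 2*C₁*((N:ℝ)^(-(δ₂-δ)) + (2/(δ₂-δ))*(N:ℝ)^(-((δ₂-δ)/2))))
        atTop (nhds 0) := by
      have t1 : Tendsto (fun N : ℕ => (N:ℝ)^(-(δ₂-δ))) atTop (nhds 0) :=
        (tendsto_rpow_neg_atTop hη).comp hnat
      have t2 : Tendsto (fun N : ℕ => (N:ℝ)^(-((δ₂-δ)/2))) atTop (nhds 0) :=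
        (tendsto_rpow_neg_atTop (by linarith)).comp hnat
      have := ((t1.add (t2.const_mul (2/(δ₂-δ)))).const_mul (2*C₁))
      simpa using this
    exact squeeze_zero' hnn hbd hlim
  have hG : Tendsto G atTop (nhds 0) := by
    rw [hGdef]
    have := (g1.add g2).add g3
    simpa using this
  refine squeeze_zero' ?_ ?_ hG
  · filter_upwards with N
    exact mul_nonneg (Real.rpow_nonneg (Nat.cast_nonneg N) _)
      (integral_nonneg fun ω => (Real.exp_pos _).le)
  · filter_upwards [eventually_ge_atTop 1] with N hN using main N hN
end

section
/- With φ(k) = (1/d)∑ cos k_i and ψ_h(k) = φ(k)² - (h/d²)∑ sin²(k_i) (h > 0 small), define G^{X-Y} = (2π)^{-d}∫ φ²/(1-φ²) dk and G_{h,odd} = (2π)^{-d}∫ φ²(1+φ²)/(1-φ²ψ_h) dk. Then G^{X-Y} - G_{h,odd} = (h/((2π)^d d²)) ∫ φ⁴ (∑_i sin² k_i) / ((1-φ²)(1-φ²ψ_h)) dk, which is strictly positive for d ≥ 4 and h > 0. -/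
open MeasureTheory Real Set

lemma aux_sin_int {r : ℝ} (hr0 : 0 < r) (hr1 : r < 1) :
    IntegrableOn (fun x : ℝ => |Real.sin x| ^ (-r)) (Set.Icc (-π) π) := by
  set f : ℝ → ℝ := fun x => |Real.sin x| ^ (-r) with hf
  have hmeas : Measurable f := by fun_prop
  have hr' : (-1 : ℝ) < -r := by linarith
  -- on [0, π/2]
  have h1 : IntervalIntegrable f volume 0 (π / 2) := by
    refine IntervalIntegrable.mono_fun
      (((intervalIntegral.intervalIntegrable_rpow' hr' (a := 0) (b := π/2))).const_mul ((2 / π) ^ (-r)))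
      hmeas.aestronglyMeasurable ?_
    rw [uIoc_of_le (by positivity : (0:ℝ) ≤ π / 2)]
    refine (ae_restrict_iff' measurableSet_Ioc).2 (Filter.Eventually.of_forall ?_)
    intro x hx
    have hx0 : 0 < x := hx.1
    have hxpi : x ≤ π / 2 := hx.2
    have hsin : 2 / π * x ≤ Real.sin x := Real.mul_le_sin hx0.le hxpi
    have hsinpos : 0 < Real.sin x := lt_of_lt_of_le (by positivity) hsin
    have : f x ≤ (2 / π * x) ^ (-r) := by
      show |Real.sin x| ^ (-r) ≤ _
      rw [abs_of_pos hsinpos]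
      exact Real.rpow_le_rpow_of_nonpos (by positivity) hsin (by linarith)
    have h2 : (2 / π * x) ^ (-r) = (2 / π) ^ (-r) * x ^ (-r) :=
      Real.mul_rpow (by positivity) hx0.le
    have hfx : 0 ≤ f x := Real.rpow_nonneg (abs_nonneg _) _
    have hb : (0:ℝ) ≤ (2 / π) ^ (-r) * x ^ (-r) := by positivity
    show ‖f x‖ ≤ ‖(2 / π) ^ (-r) * x ^ (-r)‖
    rw [Real.norm_of_nonneg hfx, Real.norm_of_nonneg hb, ← h2]
    exact this
  -- on [π/2, π]
  have h2 : IntervalIntegrable f volume (π / 2) π := by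
    have base : IntervalIntegrable (fun x : ℝ => x ^ (-r)) volume 0 (π / 2) :=
      intervalIntegral.intervalIntegrable_rpow' hr'
    have comp : IntervalIntegrable (fun x : ℝ => (π - x) ^ (-r)) volume (π / 2) π := by
      have := (base.comp_sub_left π).symm
      rwa [sub_zero, sub_half] at this
    refine IntervalIntegrable.mono_fun (comp.const_mul ((2 / π) ^ (-r)))
      hmeas.aestronglyMeasurable ?_
    rw [uIoc_of_le (by linarith [pi_pos] : π / 2 ≤ π)]
    refine (ae_restrict_iff' measurableSet_Ioc).2 (Filter.Eventually.of_forall ?_)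
    intro x hx
    have hfx : 0 ≤ f x := Real.rpow_nonneg (abs_nonneg _) _
    have hb : (0:ℝ) ≤ (2 / π) ^ (-r) * (π - x) ^ (-r) := by
      have : (0:ℝ) ≤ (π - x) ^ (-r) := Real.rpow_nonneg (by linarith [hx.2]) _
      positivity
    show ‖f x‖ ≤ ‖(2 / π) ^ (-r) * (π - x) ^ (-r)‖
    rw [Real.norm_of_nonneg hfx, Real.norm_of_nonneg hb]
    rcases eq_or_lt_of_le hx.2 with hxe | hxl
    · have : f x = 0 := by
        show |Real.sin x| ^ (-r) = 0
        rw [hxe, Real.sin_pi, abs_zero, Real.zero_rpow (by linarith)]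
      rw [this]; exact hb
    · have hpx0 : 0 < π - x := by linarith
      have hpx2 : π - x ≤ π / 2 := by linarith [hx.1]
      have hsin : 2 / π * (π - x) ≤ Real.sin x := by
        have := Real.mul_le_sin hpx0.le hpx2
        rwa [Real.sin_pi_sub] at this
      have hsinpos : 0 < Real.sin x := lt_of_lt_of_le (by positivity) hsin
      have key : f x ≤ (2 / π * (π - x)) ^ (-r) := by
        show |Real.sin x| ^ (-r) ≤ _
        rw [abs_of_pos hsinpos]
        exact Real.rpow_le_rpow_of_nonpos (by positivity) hsin (by linarith)
      rwa [Real.mul_rpow (by positivity) hpx0.le] at key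
  have h0pi : IntervalIntegrable f volume 0 π := h1.trans h2
  have hneg : IntervalIntegrable f volume (-π) 0 := by
    have heq : (fun x : ℝ => f (-x)) = f := by
      funext x; show |Real.sin (-x)| ^ (-r) = |Real.sin x| ^ (-r)
      rw [Real.sin_neg, abs_neg]
    rw [IntervalIntegrable.iff_comp_neg, heq, neg_neg, neg_zero]
    exact h0pi.symm
  have hfull : IntervalIntegrable f volume (-π) π := hneg.trans h0pi
  have := hfull.def'
  rw [uIoc_of_le (by linarith [pi_pos] : -π ≤ π)] at this
  rwa [integrableOn_Icc_iff_integrableOn_Ioc]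

lemma aux_prod_int (d : ℕ) (hd : 4 ≤ d) :
    IntegrableOn (fun k : Fin d → ℝ => ∏ i, |Real.sin (k i)| ^ (-(2 / (d:ℝ))))
      (Set.univ.pi fun _ : Fin d => Set.Icc (-π) π) := by
  have hd0 : (0:ℝ) < d := by
    have : (0:ℕ) < d := by omega
    exact_mod_cast this
  have hr0 : 0 < 2 / (d:ℝ) := by positivity
  have hr1 : 2 / (d:ℝ) < 1 := by
    rw [div_lt_one hd0]
    have : (2:ℕ) < d := by omega
    exact_mod_cast this
  set u : ℝ → ℝ := fun x => |Real.sin x| ^ (-(2 / (d:ℝ))) with hu_def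
  have hu : IntegrableOn u (Icc (-π) π) := aux_sin_int hr0 hr1
  have hv : Integrable ((Icc (-π:ℝ) π).indicator u) :=
    (integrable_indicator_iff measurableSet_Icc).2 hu
  have hprod : Integrable (fun k : Fin d → ℝ => ∏ i, (Icc (-π:ℝ) π).indicator u (k i)) :=
    Integrable.fintype_prod (f := fun _ : Fin d => (Icc (-π:ℝ) π).indicator u) fun _ => hv
  have heq : (fun k : Fin d → ℝ => ∏ i, (Icc (-π:ℝ) π).indicator u (k i))
      = (Set.univ.pi fun _ : Fin d => Icc (-π:ℝ) π).indicator (fun k => ∏ i, u (k i)) := by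
    funext k
    by_cases hk : k ∈ Set.univ.pi fun _ : Fin d => Icc (-π:ℝ) π
    · rw [Set.indicator_of_mem hk]
      exact Finset.prod_congr rfl fun i _ => Set.indicator_of_mem (hk i (Set.mem_univ i)) u
    · rw [Set.indicator_of_notMem hk]
      rw [Set.mem_univ_pi] at hk
      push_neg at hk
      obtain ⟨i, hi⟩ := hk
      exact Finset.prod_eq_zero (Finset.mem_univ i) (Set.indicator_of_notMem hi u)
  rw [heq, integrable_indicator_iff (MeasurableSet.univ_pi fun _ => measurableSet_Icc)] at hprod
  exact hprod

lemma aux_alg (c a s : ℝ) (h1 : (1 - a ^ 2) ≠ 0)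
    (h2 : (1 - a ^ 2 * (a ^ 2 - c * s)) ≠ 0) :
    a ^ 2 / (1 - a ^ 2) - a ^ 2 * (1 + a ^ 2) / (1 - a ^ 2 * (a ^ 2 - c * s))
      = c * (a ^ 4 * s / ((1 - a ^ 2) * (1 - a ^ 2 * (a ^ 2 - c * s)))) := by
  field_simp
  ring

/-- With `φ(k) = (1/d) ∑ cos k_i` and `ψ_h(k) = φ(k)² - (h/d²) ∑ sin² k_i`,
the difference of Green functions
`G^{X-Y} - G_{h,odd} = (h/((2π)^d d²)) ∫ φ⁴ (∑ sin² k_i)/((1-φ²)(1-φ²ψ_h))`,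
which is strictly positive for `d ≥ 4` and `h > 0`. -/
theorem green_difference_eq_and_pos (d : ℕ) (hd : 4 ≤ d) (h : ℝ) (hh : 0 < h) :
    let box : Set (Fin d → ℝ) := Set.univ.pi fun _ => Set.Icc (-Real.pi) Real.pi
    let φ : (Fin d → ℝ) → ℝ := fun k => (1 / d) * ∑ i, Real.cos (k i)
    let ψ : (Fin d → ℝ) → ℝ :=
      fun k => (φ k) ^ 2 - (h / (d : ℝ) ^ 2) * ∑ i, Real.sin (k i) ^ 2
    ((2 * Real.pi) ^ (-(d : ℝ)) * ∫ k in box, (φ k) ^ 2 / (1 - (φ k) ^ 2)) -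
        (2 * Real.pi) ^ (-(d : ℝ)) *
          ∫ k in box, (φ k) ^ 2 * (1 + (φ k) ^ 2) / (1 - (φ k) ^ 2 * ψ k)
      = (h / ((2 * Real.pi) ^ (d : ℕ) * (d : ℝ) ^ 2)) *
          ∫ k in box, (φ k) ^ 4 * (∑ i, Real.sin (k i) ^ 2) /
            ((1 - (φ k) ^ 2) * (1 - (φ k) ^ 2 * ψ k)) ∧
    0 < (h / ((2 * Real.pi) ^ (d : ℕ) * (d : ℝ) ^ 2)) *
          ∫ k in box, (φ k) ^ 4 * (∑ i, Real.sin (k i) ^ 2) /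
            ((1 - (φ k) ^ 2) * (1 - (φ k) ^ 2 * ψ k)) := by
  intro box φ ψ
  have hd0 : (0:ℝ) < d := by
    have : (0:ℕ) < d := by omega
    exact_mod_cast this
  have hdne : (d:ℝ) ≠ 0 := ne_of_gt hd0
  haveI : NeZero d := ⟨by omega⟩
  set S : (Fin d → ℝ) → ℝ := fun k => ∑ i, Real.sin (k i) ^ 2 with hS_def
  set W : (Fin d → ℝ) → ℝ := fun k => ∏ i, |Real.sin (k i)| ^ (-(2 / (d:ℝ))) with hW_def
  have hWint : IntegrableOn W box := aux_prod_int d hd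
  have hSnn : ∀ k, 0 ≤ S k := fun k => Finset.sum_nonneg fun i _ => sq_nonneg _
  -- key coercivity bound
  have key : ∀ k, S k / d ≤ 1 - φ k ^ 2 := by
    intro k
    have h1 : (∑ i, Real.cos (k i)) ^ 2 ≤ (d:ℝ) * ∑ i, Real.cos (k i) ^ 2 := by
      simpa using sq_sum_le_card_mul_sum_sq (s := (Finset.univ : Finset (Fin d)))
        (f := fun i => Real.cos (k i))
    have h2 : ∑ i, Real.cos (k i) ^ 2 = (d:ℝ) - S k := by
      rw [hS_def]
      simp [Real.cos_sq', Finset.sum_sub_distrib, Finset.card_univ]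
    rw [h2] at h1
    show S k / d ≤ 1 - ((1/(d:ℝ)) * ∑ i, Real.cos (k i)) ^ 2
    have expand : 1 - ((1:ℝ)/(d:ℝ) * ∑ i, Real.cos (k i)) ^ 2 - S k / d
        = ((d:ℝ) * ((d:ℝ) - S k) - (∑ i, Real.cos (k i)) ^ 2) / (d:ℝ)^2 := by
      field_simp
      ring
    have hnn : 0 ≤ 1 - ((1:ℝ)/(d:ℝ) * ∑ i, Real.cos (k i)) ^ 2 - S k / d := by
      rw [expand]
      apply div_nonneg _ (by positivity)
      linarith
    linarith
  have hφ1 : ∀ k, φ k ^ 2 ≤ 1 := by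
    intro k
    have := key k
    have : (0:ℝ) ≤ S k / d := div_nonneg (hSnn k) hd0.le
    linarith [key k]
  have hψle : ∀ k, ψ k ≤ φ k ^ 2 := by
    intro k
    show φ k ^ 2 - (h / (d:ℝ)^2) * S k ≤ φ k ^ 2
    have : 0 ≤ (h / (d:ℝ)^2) * S k := mul_nonneg (by positivity) (hSnn k)
    linarith
  have gen : ∀ a p t : ℝ, t ≤ 1 - a ^ 2 → p ≤ a ^ 2 → a ^ 2 ≤ 1 → t ≤ 1 - a ^ 2 * p := by
    intro a p t hkey hp ha
    nlinarith [mul_nonneg (sq_nonneg a) (sub_nonneg.2 hp),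
      mul_nonneg (sq_nonneg a) (sub_nonneg.2 ha)]
  have keyD2 : ∀ k, S k / d ≤ 1 - φ k ^ 2 * ψ k := fun k =>
    gen (φ k) (ψ k) (S k / d) (key k) (hψle k) (hφ1 k)
  have hD1nn : ∀ k, 0 ≤ 1 - φ k ^ 2 := fun k =>
    le_trans (div_nonneg (hSnn k) hd0.le) (key k)
  have hD2nn : ∀ k, 0 ≤ 1 - φ k ^ 2 * ψ k := fun k =>
    le_trans (div_nonneg (hSnn k) hd0.le) (keyD2 k)
  -- a.e. nonvanishing of sines
  have hae : ∀ᵐ k : Fin d → ℝ ∂(volume.restrict box), ∀ i, Real.sin (k i) ≠ 0 := by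
    refine ae_restrict_of_ae ?_
    rw [ae_all_iff]
    intro i
    have hz : volume {x : ℝ | Real.sin x = 0} = 0 := by
      have hc : {x : ℝ | Real.sin x = 0}.Countable := by
        refine (Set.countable_range fun n : ℤ => (n:ℝ) * π).mono ?_
        intro x hx
        obtain ⟨n, hn⟩ := Real.sin_eq_zero_iff.1 hx
        exact ⟨n, hn⟩
      exact hc.measure_zero _
    have hnull : volume {k : Fin d → ℝ | Real.sin (k i) = 0} = 0 := by
      have : (volume : Measure (Fin d → ℝ)) = Measure.pi fun _ => (volume : Measure ℝ) :=
        rfl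
      rw [this]
      exact MeasureTheory.Measure.pi_eval_preimage_null (μ := fun _ : Fin d => (volume : Measure ℝ)) (i := i) hz
    rw [ae_iff]
    simpa using hnull
  -- pointwise bounds where all sines are nonzero
  have hbounds : ∀ k : Fin d → ℝ, (∀ i, Real.sin (k i) ≠ 0) →
      (d:ℝ) / S k ≤ W k ∧ 0 < S k := by
    intro k hk
    have hSpos : 0 < S k := by
      refine Finset.sum_pos (fun i _ => ?_) ⟨⟨0, by omega⟩, Finset.mem_univ _⟩
      exact lt_of_le_of_ne (sq_nonneg _) (Ne.symm (pow_ne_zero 2 (hk i)))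
    refine ⟨?_, hSpos⟩
    set P : ℝ := ∏ i, (Real.sin (k i) ^ 2) ^ ((d:ℝ)⁻¹) with hP_def
    have hPpos : 0 < P := by
      refine Finset.prod_pos fun i _ => ?_
      exact Real.rpow_pos_of_pos (lt_of_le_of_ne (sq_nonneg _) (Ne.symm (pow_ne_zero 2 (hk i)))) _
    have amgm : P ≤ (d:ℝ)⁻¹ * S k := by
      have := Real.geom_mean_le_arith_mean_weighted Finset.univ (fun _ : Fin d => (d:ℝ)⁻¹)
        (fun i => Real.sin (k i) ^ 2) (fun _ _ => by positivity)
        (by simp [Finset.card_univ, mul_inv_cancel₀ hdne]) (fun i _ => sq_nonneg _)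
      rw [← Finset.mul_sum] at this
      exact this
    have hWP : W k = P⁻¹ := by
      rw [hW_def, hP_def, ← Finset.prod_inv_distrib]
      refine Finset.prod_congr rfl fun i _ => ?_
      rw [← sq_abs, ← Real.rpow_natCast |Real.sin (k i)| 2, ← Real.rpow_mul (abs_nonneg _),
        ← Real.rpow_neg (abs_nonneg _)]
      norm_num [div_eq_mul_inv]
    rw [hWP]
    rw [div_le_iff₀ hSpos, inv_mul_eq_div, le_div_iff₀ hPpos]
    calc (d:ℝ) * P ≤ (d:ℝ) * ((d:ℝ)⁻¹ * S k) := by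
          exact mul_le_mul_of_nonneg_left amgm hd0.le
      _ = S k := by field_simp
  -- integrand abbreviations
  set F := fun k : Fin d → ℝ => (φ k) ^ 2 / (1 - (φ k) ^ 2) with hF_def
  set G := fun k : Fin d → ℝ => (φ k) ^ 2 * (1 + (φ k) ^ 2) / (1 - (φ k) ^ 2 * ψ k) with hG_def
  set Q := fun k : Fin d → ℝ => (φ k) ^ 4 * (∑ i, Real.sin (k i) ^ 2) /
    ((1 - (φ k) ^ 2) * (1 - (φ k) ^ 2 * ψ k)) with hQ_def
  have hQS : ∀ k, Q k = (φ k) ^ 4 * S k / ((1 - (φ k) ^ 2) * (1 - (φ k) ^ 2 * ψ k)) :=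
    fun k => rfl
  -- measurability
  have hmφ : Measurable φ := by
    have : φ = fun k : Fin d → ℝ => (1 / (d:ℝ)) * ∑ i, Real.cos (k i) := rfl
    rw [this]; fun_prop
  have hmS : Measurable S := by
    have : S = fun k : Fin d → ℝ => ∑ i, Real.sin (k i) ^ 2 := rfl
    rw [this]; fun_prop
  have hmψ : Measurable ψ := by
    have : ψ = fun k => φ k ^ 2 - (h / (d:ℝ) ^ 2) * S k := rfl
    rw [this]
    exact (hmφ.pow_const 2).sub (measurable_const.mul hmS)
  have hmF : Measurable F :=
    (hmφ.pow_const 2).div (measurable_const.sub (hmφ.pow_const 2))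
  have hmG : Measurable G :=
    ((hmφ.pow_const 2).mul (measurable_const.add (hmφ.pow_const 2))).div
      (measurable_const.sub ((hmφ.pow_const 2).mul hmψ))
  have hmQ : Measurable Q := by
    have : Q = fun k => (φ k) ^ 4 * S k / ((1 - (φ k) ^ 2) * (1 - (φ k) ^ 2 * ψ k)) := rfl
    rw [this]
    exact ((hmφ.pow_const 4).mul hmS).div
      ((measurable_const.sub (hmφ.pow_const 2)).mul
        (measurable_const.sub ((hmφ.pow_const 2).mul hmψ)))
  -- pointwise domination
  have hptf : ∀ k : Fin d → ℝ, (∀ i, Real.sin (k i) ≠ 0) →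
      F k ≤ W k ∧ G k ≤ 2 * W k ∧ Q k ≤ (d:ℝ) * W k := by
    intro k hk
    obtain ⟨hdSW, hSpos⟩ := hbounds k hk
    have hSd : 0 < S k / d := div_pos hSpos hd0
    have hD1 : 0 < 1 - φ k ^ 2 := lt_of_lt_of_le hSd (key k)
    have hD2 : 0 < 1 - φ k ^ 2 * ψ k := lt_of_lt_of_le hSd (keyD2 k)
    have hφ4 : (φ k) ^ 4 ≤ 1 := by
      nlinarith [hφ1 k, sq_nonneg (φ k),
        mul_nonneg (sub_nonneg.2 (hφ1 k)) (by positivity : (0:ℝ) ≤ 1 + φ k ^ 2)]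
    refine ⟨?_, ?_, ?_⟩
    · calc F k ≤ 1 / (1 - φ k ^ 2) := div_le_div₀ zero_le_one (hφ1 k) hD1 le_rfl
          _ ≤ 1 / (S k / d) := by gcongr; exact key k
          _ = (d:ℝ) / S k := one_div_div _ _
          _ ≤ W k := hdSW
    · calc G k ≤ 2 / (1 - φ k ^ 2 * ψ k) := by
            apply div_le_div₀ (by norm_num) ?_ hD2 le_rfl
            nlinarith [hφ1 k, sq_nonneg (φ k)]
          _ ≤ 2 / (S k / d) := by gcongr; exact keyD2 k
          _ = 2 * ((d:ℝ) / S k) := by rw [div_div_eq_mul_div, mul_div_assoc]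
          _ ≤ 2 * W k := by gcongr
    · calc Q k ≤ 1 * S k / ((S k / d) * (S k / d)) := by
            rw [hQS k]
            apply div_le_div₀ (by positivity) ?_ (by positivity) ?_
            · exact mul_le_mul_of_nonneg_right hφ4 (hSnn k)
            · exact mul_le_mul (key k) (keyD2 k) hSd.le hD1.le
          _ = (d:ℝ) * ((d:ℝ) / S k) := by
            have hgen : ∀ t : ℝ, 0 < t → 1 * t / ((t / (d:ℝ)) * (t / (d:ℝ)))
                = (d:ℝ) * ((d:ℝ) / t) := by
              intro t ht
              field_simp
            exact hgen (S k) hSpos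
          _ ≤ (d:ℝ) * W k := by gcongr
  -- nonnegativity
  have hFnn : ∀ k, 0 ≤ F k := fun k => div_nonneg (sq_nonneg _) (hD1nn k)
  have hGnn : ∀ k, 0 ≤ G k := fun k =>
    div_nonneg (mul_nonneg (sq_nonneg _) (by positivity)) (hD2nn k)
  have hQnn : ∀ k, 0 ≤ Q k := fun k => by
    rw [hQS k]
    exact div_nonneg (mul_nonneg (by positivity) (hSnn k))
      (mul_nonneg (hD1nn k) (hD2nn k))
  -- integrability
  have hFint : IntegrableOn F box := by
    refine Integrable.mono' hWint hmF.aestronglyMeasurable ?_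
    filter_upwards [hae] with k hk
    rw [Real.norm_of_nonneg (hFnn k)]
    exact (hptf k hk).1
  have hGint : IntegrableOn G box := by
    refine Integrable.mono' (hWint.const_mul 2) hmG.aestronglyMeasurable ?_
    filter_upwards [hae] with k hk
    rw [Real.norm_of_nonneg (hGnn k)]
    exact (hptf k hk).2.1
  have hQint : IntegrableOn Q box := by
    refine Integrable.mono' (hWint.const_mul (d:ℝ)) hmQ.aestronglyMeasurable ?_
    filter_upwards [hae] with k hk
    rw [Real.norm_of_nonneg (hQnn k)]
    exact (hptf k hk).2.2
  -- a.e. algebraic identity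
  have heqae : (fun k => F k - G k) =ᵐ[volume.restrict box]
      fun k => h / (d:ℝ) ^ 2 * Q k := by
    filter_upwards [hae] with k hk
    obtain ⟨-, hSpos⟩ := hbounds k hk
    have hSd : 0 < S k / d := div_pos hSpos hd0
    have hD1 : (1 - φ k ^ 2) ≠ 0 := ne_of_gt (lt_of_lt_of_le hSd (key k))
    have hψk : ψ k = φ k ^ 2 - h / (d:ℝ) ^ 2 * S k := rfl
    have hD2 : (1 - φ k ^ 2 * (φ k ^ 2 - h / (d:ℝ) ^ 2 * S k)) ≠ 0 := by
      rw [← hψk]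
      exact ne_of_gt (lt_of_lt_of_le hSd (keyD2 k))
    have := aux_alg (h / (d:ℝ) ^ 2) (φ k) (S k) hD1 hD2
    rw [← hψk] at this
    show F k - G k = h / (d:ℝ) ^ 2 * Q k
    rw [hF_def, hG_def, hQS k]
    exact this
  -- the integral identity
  have hAB : (∫ k in box, F k) - (∫ k in box, G k) = h / (d:ℝ) ^ 2 * ∫ k in box, Q k := by
    rw [← integral_sub hFint hGint, integral_congr_ae heqae, integral_const_mul]
  -- power identity
  have hpow : (2 * π) ^ (-(d:ℝ)) = ((2 * π) ^ (d:ℕ))⁻¹ := by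
    rw [← Real.rpow_natCast (2 * π) d, ← Real.rpow_neg (by positivity)]
  -- positivity of the Q-integral
  have hC : 0 < ∫ k in box, Q k := by
    rw [setIntegral_pos_iff_support_of_nonneg_ae
      (Filter.Eventually.of_forall fun k => hQnn k) hQint]
    set U : Set (Fin d → ℝ) := Set.univ.pi fun _ => Ioo (π/4) (π/3) with hU_def
    have hUsub : U ⊆ Function.support Q ∩ box := by
      intro k hk
      have hki : ∀ i, k i ∈ Ioo (π/4) (π/3) := fun i => hk i (Set.mem_univ i)
      have hsin : ∀ i, 0 < Real.sin (k i) := fun i =>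
        Real.sin_pos_of_pos_of_lt_pi (by linarith [pi_pos, (hki i).1])
          (by linarith [(hki i).2, pi_pos])
      have hcos : ∀ i, 0 < Real.cos (k i) := fun i =>
        Real.cos_pos_of_mem_Ioo
          ⟨by linarith [(hki i).1, pi_pos], by linarith [(hki i).2, pi_pos]⟩
      have hSpos : 0 < S k :=
        Finset.sum_pos (fun i _ => pow_pos (hsin i) 2) ⟨⟨0, by omega⟩, Finset.mem_univ _⟩
      have hφpos : 0 < φ k := by
        show 0 < (1/(d:ℝ)) * ∑ i, Real.cos (k i)
        exact mul_pos (by positivity)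
          (Finset.sum_pos (fun i _ => hcos i) ⟨⟨0, by omega⟩, Finset.mem_univ _⟩)
      have hSd : 0 < S k / d := div_pos hSpos hd0
      have hD1 : 0 < 1 - φ k ^ 2 := lt_of_lt_of_le hSd (key k)
      have hD2 : 0 < 1 - φ k ^ 2 * ψ k := lt_of_lt_of_le hSd (keyD2 k)
      constructor
      · have : 0 < Q k := by
          rw [hQS k]
          exact div_pos (mul_pos (pow_pos hφpos 4) hSpos) (mul_pos hD1 hD2)
        exact ne_of_gt this
      · intro i _
        exact ⟨by linarith [(hki i).1, pi_pos], by linarith [(hki i).2, pi_pos]⟩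
    refine lt_of_lt_of_le ?_ (measure_mono hUsub)
    rw [hU_def]
    have : volume (Set.univ.pi fun _ : Fin d => Ioo (π/4) (π/3))
        = ∏ _i : Fin d, volume (Ioo (π/4 : ℝ) (π/3)) := volume_pi_pi _
    rw [this, Real.volume_Ioo, Finset.prod_const]
    apply ENNReal.pow_pos
    rw [ENNReal.ofReal_pos]
    linarith [pi_pos]
  -- conclusion
  constructor
  · rw [← mul_sub, hAB, hpow]
    ring
  · exact mul_pos (div_pos hh (by positivity)) hC
end

section
/- Let γ ∈ (0,1), d ∈ (0, 1/2), and set f₂⁻¹-moment M(h) = 1 - 1/d' + ((1+h)^{-γ/(1-γ)} + (1-h)^{-γ/(1-γ)})/(2d') where d' = d. Then there exists h₀ > 0 such that for all 0 < h < h₀, M(h) ≤ exp(γh²/(d'(1-γ)²)). -/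
open Real Set

private lemma hasDerivAt_one_add_rpow (p x : ℝ) (hx : (1:ℝ) + x ≠ 0) :
    HasDerivAt (fun y : ℝ => (1 + y) ^ p) (p * (1 + x) ^ (p - 1)) x := by
  have h1 : HasDerivAt (fun y : ℝ => 1 + y) 1 x := (hasDerivAt_id x).const_add 1
  have := (Real.hasDerivAt_rpow_const (p := p) (Or.inl hx)).comp x h1
  simpa [Function.comp_def] using this

private lemma hasDerivAt_one_sub_rpow (p x : ℝ) (hx : (1:ℝ) - x ≠ 0) :
    HasDerivAt (fun y : ℝ => (1 - y) ^ p) (-(p * (1 - x) ^ (p - 1))) x := by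
  have h1 : HasDerivAt (fun y : ℝ => 1 - y) (-1) x := by
    simpa [sub_eq_add_neg] using ((hasDerivAt_id x).neg.const_add 1)
  have := (Real.hasDerivAt_rpow_const (p := p) (Or.inl hx)).comp x h1
  simpa [mul_comm, sub_eq_add_neg, Function.comp_def] using this

/-- Key estimate for the two-step Radon–Nikodym density of the tilted walk:
for `γ ∈ (0,1)` and `d ∈ (0, 1/2)`, setting
`M(h) = 1 - 1/d + ((1+h)^{-γ/(1-γ)} + (1-h)^{-γ/(1-γ)})/(2d)`, there is
`h₀ > 0` such that `M(h) ≤ exp(γ h² / (d (1-γ)²))` for all `0 < h < h₀`. -/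
theorem tilted_density_moment_bound (γ d : ℝ) (hγ0 : 0 < γ) (hγ1 : γ < 1)
    (hd0 : 0 < d) (hd1 : d < 1 / 2) :
    ∃ h₀ > 0, ∀ h : ℝ, 0 < h → h < h₀ →
      1 - 1 / d +
          ((1 + h) ^ (-(γ / (1 - γ))) + (1 - h) ^ (-(γ / (1 - γ)))) / (2 * d)
        ≤ Real.exp (γ * h ^ 2 / (d * (1 - γ) ^ 2)) := by
  have hγ' : 0 < 1 - γ := by linarith
  set α : ℝ := γ / (1 - γ) with hαdef
  have hα : 0 < α := div_pos hγ0 hγ'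
  have hα2 : (0:ℝ) < α + 2 := by linarith
  set r : ℝ := (1/2 : ℝ) ^ ((α + 2)⁻¹) with hrdef
  have hr0 : 0 < r := Real.rpow_pos_of_pos (by norm_num) _
  have hr1 : r < 1 := Real.rpow_lt_one (by norm_num) (by norm_num) (inv_pos.mpr hα2)
  refine ⟨1 - r, by linarith, ?_⟩
  intro h hh0 hh1
  have hh1' : h < 1 := by linarith
  -- bound on ξ ^ (-α - 2) for ξ ≥ r
  have hxi : ∀ ξ : ℝ, r ≤ ξ → ξ ^ (-α - 2) ≤ 2 := by
    intro ξ hξ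
    have hξ0 : 0 < ξ := lt_of_lt_of_le hr0 hξ
    have h1 : (1/2 : ℝ) ≤ ξ ^ (α + 2) := by
      have h2 : r ^ (α + 2) ≤ ξ ^ (α + 2) := Real.rpow_le_rpow hr0.le hξ hα2.le
      have h3 : r ^ (α + 2) = 1/2 := by
        rw [hrdef, ← Real.rpow_mul (by norm_num : (0:ℝ) ≤ 1/2),
          inv_mul_cancel₀ hα2.ne', Real.rpow_one]
      linarith
    have heq : ξ ^ (-α - 2) = (ξ ^ (α + 2))⁻¹ := by
      rw [← Real.rpow_neg hξ0.le]; ring_nf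
    rw [heq]
    have hp : (0:ℝ) < ξ ^ (α + 2) := Real.rpow_pos_of_pos hξ0 _
    rw [inv_le_comm₀ hp (by norm_num)]
    linarith
  -- the derivative comparison on (0, h)
  have hkey : ∀ x ∈ Ioo (0:ℝ) h,
      (1 - x) ^ (-α - 1) - (1 + x) ^ (-α - 1) ≤ 4 * (α + 1) * x := by
    intro x hx
    obtain ⟨hx0, hxh⟩ := hx
    have hxr : r < 1 - x := by linarith
    have h1x : (0:ℝ) < 1 - x := by linarith
    have hab : (1:ℝ) - x < 1 + x := by linarith
    have hderiv : ∀ u ∈ Ioo (1 - x) (1 + x),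
        HasDerivAt (fun u : ℝ => u ^ (-α - 1)) ((-α - 1) * u ^ (-α - 1 - 1)) u := by
      intro u hu
      exact Real.hasDerivAt_rpow_const (Or.inl (by nlinarith [hu.1] : u ≠ 0))
    have hcont : ContinuousOn (fun u : ℝ => u ^ (-α - 1)) (Icc (1 - x) (1 + x)) := by
      intro u hu
      have hu0 : u ≠ 0 := by nlinarith [hu.1]
      exact (Real.hasDerivAt_rpow_const (p := -α - 1)
        (Or.inl hu0)).continuousAt.continuousWithinAt
    obtain ⟨ξ, hξmem, hξeq⟩ := exists_hasDerivAt_eq_slope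
      (fun u : ℝ => u ^ (-α - 1)) (fun u => (-α - 1) * u ^ (-α - 1 - 1)) hab hcont hderiv
    have h2x : (1 + x) - (1 - x) = 2 * x := by ring
    rw [h2x] at hξeq
    have heq := (div_eq_iff (by positivity : (2:ℝ) * x ≠ 0)).mp hξeq.symm
    have hξr : r ≤ ξ := le_of_lt (lt_trans hxr hξmem.1)
    have hexp2 : (-α - 1 - 1 : ℝ) = -α - 2 := by ring
    rw [hexp2] at heq
    have hξb : ξ ^ (-α - 2) ≤ 2 := hxi ξ hξr
    have hξpos : 0 < ξ ^ (-α - 2) :=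
      Real.rpow_pos_of_pos (lt_of_lt_of_le hr0 hξr) _
    nlinarith [heq, hξb, hξpos, hx0,
      mul_nonneg (mul_nonneg (by linarith : (0:ℝ) ≤ α + 1) (by linarith : (0:ℝ) ≤ 2 * x))
        (by linarith : (0:ℝ) ≤ 2 - ξ ^ (-α - 2))]
  -- monotonicity of F
  set F : ℝ → ℝ := fun x => 2 + 2 * α * (α + 1) * x ^ 2 - ((1 + x) ^ (-α) + (1 - x) ^ (-α))
    with hFdef
  set F' : ℝ → ℝ := fun x =>
    4 * α * (α + 1) * x - (-α * (1 + x) ^ (-α - 1) + -(-α * (1 - x) ^ (-α - 1))) with hF'def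
  have hFderiv : ∀ x ∈ Icc (0:ℝ) h, HasDerivAt F (F' x) x := by
    intro x hx
    have h1 : (1:ℝ) + x ≠ 0 := by nlinarith [hx.1]
    have h2 : (1:ℝ) - x ≠ 0 := by nlinarith [hx.2]
    have ha := hasDerivAt_one_add_rpow (-α) x h1
    have hb := hasDerivAt_one_sub_rpow (-α) x h2
    have hq : HasDerivAt (fun x : ℝ => 2 + 2 * α * (α + 1) * x ^ 2)
        (4 * α * (α + 1) * x) x := by
      have hd := ((hasDerivAt_pow 2 x).const_mul (2 * α * (α + 1))).const_add 2
      convert hd using 1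
      · rfl
      · rfl
      · push_cast; ring
    simp only [hFdef, hF'def]
    exact hq.sub (ha.add hb)
  have hmono : MonotoneOn F (Icc 0 h) := by
    apply monotoneOn_of_deriv_nonneg (convex_Icc 0 h)
    · exact fun x hx => (hFderiv x hx).continuousAt.continuousWithinAt
    · rw [interior_Icc]
      exact fun x hx =>
        (hFderiv x (Ioo_subset_Icc_self hx)).differentiableAt.differentiableWithinAt
    · rw [interior_Icc]
      intro x hx
      rw [(hFderiv x (Ioo_subset_Icc_self hx)).deriv]
      have hk := hkey x hx
      have hk' := mul_le_mul_of_nonneg_left hk hα.le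
      simp only [hF'def]
      nlinarith [hk']
  have hF0 : F 0 = 0 := by simp [hFdef]; norm_num
  have hFh : 0 ≤ F h := by
    have := hmono (left_mem_Icc.mpr hh0.le) (right_mem_Icc.mpr hh0.le) hh0.le
    rw [hF0] at this; exact this
  have hg : (1 + h) ^ (-α) + (1 - h) ^ (-α) ≤ 2 + 2 * α * (α + 1) * h ^ 2 := by
    simp only [hFdef] at hFh; linarith
  have hαval : α * (α + 1) = γ / (1 - γ) ^ 2 := by
    rw [hαdef]; field_simp; try ring
    try exact Or.inl trivial
  have h2d : (0:ℝ) < 2 * d := by linarith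
  calc 1 - 1 / d + ((1 + h) ^ (-α) + (1 - h) ^ (-α)) / (2 * d)
      ≤ 1 - 1 / d + (2 + 2 * α * (α + 1) * h ^ 2) / (2 * d) := by
        exact add_le_add_right (div_le_div_of_nonneg_right hg h2d.le) _
    _ = 1 + (α * (α + 1)) * h ^ 2 / d := by field_simp; ring
    _ = 1 + γ * h ^ 2 / (d * (1 - γ) ^ 2) := by
        rw [hαval]; field_simp
    _ ≤ Real.exp (γ * h ^ 2 / (d * (1 - γ) ^ 2)) := by
        linarith [Real.add_one_le_exp (γ * h ^ 2 / (d * (1 - γ) ^ 2))]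
end

section
/- Let X be a continuous-time simple random walk on ℤ^d with jump rate 1 and let p_t(x) = P(X_t = x). Then there is a constant C > 0 such that p_t(x) ≥ C (1+t)^{-d/2} (2d)^{-‖x‖₁} for all t > 0 and all x ∈ ℤ^d with ‖x‖₁ ≤ t/2. -/
/-- The `j`-th of the `2d` unit steps on `ℤ^d`. -/
def srwStep (d : ℕ) (j : Fin (2 * d)) : Fin d → ℤ :=
  fun i => if j.val < d then (if j.val = i.val then 1 else 0)
    else (if j.val = d + i.val then -1 else 0)

/-- `n`-step transition probability of discrete-time simple random walk on `ℤ^d`. -/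
noncomputable def nstepProb (d n : ℕ) (x : Fin d → ℤ) : ℝ :=
  ((Finset.univ : Finset (Fin n → Fin (2 * d))).filter
      (fun s => (∑ i, srwStep d (s i)) = x)).card / (2 * d : ℝ) ^ n

/-- Transition kernel `p_t(x)` of the rate-1 continuous-time simple random walk
on `ℤ^d`, as a Poisson mixture of the discrete-time kernels. -/
noncomputable def ctKernel (d : ℕ) (t : ℝ) (x : Fin d → ℤ) : ℝ :=
  ∑' n : ℕ, Real.exp (-t) * t ^ n / (n.factorial : ℝ) * nstepProb d n x

namespace SRW

/-- number of `n`-step paths from `0` to `x` -/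
def pathCount (d n : ℕ) (x : Fin d → ℤ) : ℕ :=
  ((Finset.univ : Finset (Fin n → Fin (2 * d))).filter
      (fun s => (∑ i, srwStep d (s i)) = x)).card

lemma pathCount_congr (d : ℕ) {a b : ℕ} (h : a = b) (x : Fin d → ℤ) :
    pathCount d a x = pathCount d b x := by subst h; rfl

lemma step_sum_zero (d : ℕ) (c : Fin d) : ∑ j : Fin (2 * d), srwStep d j c = 0 := by
  rw [← Fin.sum_congr' (fun j => srwStep d j c) (two_mul d).symm, Fin.sum_univ_add]
  have h1 : ∀ i : Fin d, srwStep d (Fin.cast (two_mul d).symm (Fin.castAdd d i)) c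
      = if i = c then 1 else 0 := by
    intro i
    simp only [srwStep, Fin.coe_cast, Fin.coe_castAdd]
    rw [if_pos i.isLt]
    simp [Fin.ext_iff]
  have h2 : ∀ i : Fin d, srwStep d (Fin.cast (two_mul d).symm (Fin.natAdd d i)) c
      = if i = c then -1 else 0 := by
    intro i
    simp only [srwStep, Fin.coe_cast, Fin.coe_natAdd]
    rw [if_neg (by omega)]
    have : d + i.val = d + c.val ↔ i = c := by rw [Fin.ext_iff]; omega
    simp [this, Fin.val_inj]
  simp only [h1, h2]
  simp

lemma step_sq_sum (d : ℕ) (j : Fin (2 * d)) : ∑ c : Fin d, (srwStep d j c) ^ 2 = 1 := by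
  by_cases h : j.val < d
  · have : ∀ c : Fin d, (srwStep d j c)^2 = if c = ⟨j.val, h⟩ then 1 else 0 := by
      intro c
      simp only [srwStep, if_pos h, Fin.ext_iff]
      by_cases hc : j.val = c.val
      · rw [if_pos hc, if_pos (by omega)]; ring
      · rw [if_neg hc, if_neg (by omega)]; ring
    simp [this]
  · have hj2 : j.val < 2 * d := j.isLt
    have h2 : j.val - d < d := by omega
    have : ∀ c : Fin d, (srwStep d j c)^2 = if c = ⟨j.val - d, h2⟩ then 1 else 0 := by
      intro c
      simp only [srwStep, if_neg h, Fin.ext_iff]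
      by_cases hc : j.val = d + c.val
      · rw [if_pos hc, if_pos (by omega)]; ring
      · rw [if_neg hc, if_neg (by omega)]; ring
    simp [this]

end SRW


namespace SRW

lemma sum_sq_pos (d : ℕ) : ∀ k : ℕ,
    ∑ s : Fin k → Fin (2 * d), ∑ c : Fin d, (∑ i, srwStep d (s i) c) ^ 2
      = (k : ℤ) * (2 * d) ^ k := by
  intro k
  induction k with
  | zero => simp
  | succ k ih =>
    have e1 : ∑ s : Fin (k+1) → Fin (2*d), ∑ c : Fin d, (∑ i, srwStep d (s i) c) ^ 2
        = ∑ a : Fin (2*d), ∑ u : Fin k → Fin (2*d), ∑ c : Fin d,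
            (srwStep d a c + ∑ i, srwStep d (u i) c) ^ 2 := by
      rw [← Equiv.sum_comp (Fin.consEquiv (fun _ => Fin (2*d)))
        (fun s => ∑ c : Fin d, (∑ i, srwStep d (s i) c) ^ 2), Fintype.sum_prod_type]
      apply Finset.sum_congr rfl; intro a _
      apply Finset.sum_congr rfl; intro u _
      apply Finset.sum_congr rfl; intro c _
      congr 1
      rw [Fin.sum_univ_succ]
      simp [Fin.consEquiv]
    rw [e1]
    have e2 : ∀ a : Fin (2*d), ∀ u : Fin k → Fin (2*d), ∀ c : Fin d,
        (srwStep d a c + ∑ i, srwStep d (u i) c) ^ 2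
        = (srwStep d a c)^2 + (2 * ((∑ i, srwStep d (u i) c)) * srwStep d a c
            + (∑ i, srwStep d (u i) c)^2) := by intro a u c; ring
    simp only [e2, Finset.sum_add_distrib]
    have t1 : ∑ a : Fin (2*d), ∑ _u : Fin k → Fin (2*d), ∑ c : Fin d, (srwStep d a c)^2
        = (2*d : ℤ) * (2*d)^k := by
      simp only [Finset.sum_const, Finset.card_univ]
      simp [step_sq_sum d, mul_comm]
    have t2 : ∑ a : Fin (2*d), ∑ u : Fin k → Fin (2*d), ∑ c : Fin d,
        2 * ((∑ i, srwStep d (u i) c)) * srwStep d a c = 0 := by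
      rw [Finset.sum_comm]
      apply Finset.sum_eq_zero; intro u _
      rw [Finset.sum_comm]
      apply Finset.sum_eq_zero; intro c _
      rw [← Finset.mul_sum, step_sum_zero d c, mul_zero]
    have t3 : ∑ _a : Fin (2*d), ∑ u : Fin k → Fin (2*d), ∑ c : Fin d,
        (∑ i, srwStep d (u i) c)^2 = (2*d : ℤ) * ((k:ℤ) * (2*d)^k) := by
      rw [Finset.sum_const, Finset.card_univ, ih]
      simp [mul_comm]
    rw [t1, t2, t3]
    push_cast
    ring
end SRW

namespace SRW

lemma partition_count (d k : ℕ) (S : Finset (Fin d → ℤ)) :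
    (Finset.univ.filter (fun s : Fin k → Fin (2*d) => (∑ i, srwStep d (s i)) ∈ S)).card
      = ∑ x ∈ S, pathCount d k x := by
  rw [Finset.card_eq_sum_card_fiberwise
    (f := fun s : Fin k → Fin (2*d) => ∑ i, srwStep d (s i)) (t := S)
    (s := Finset.univ.filter (fun s : Fin k → Fin (2*d) => (∑ i, srwStep d (s i)) ∈ S))
    (fun s hs => (Finset.mem_filter.mp (Finset.mem_coe.mp hs)).2)]
  apply Finset.sum_congr rfl
  intro x hx
  unfold pathCount
  congr 1
  ext s
  simp only [Finset.mem_filter, Finset.mem_univ, true_and, and_iff_right_iff_imp]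
  intro h; rw [h]; exact hx

lemma markov_bound (d k : ℕ) :
    (2*d)^k ≤ 2 * ∑ x ∈ Fintype.piFinset
        (fun _ : Fin d => Finset.Icc (-(Nat.sqrt (2*k) : ℤ)) (Nat.sqrt (2*k))),
      pathCount d k x := by
  set r : ℕ := Nat.sqrt (2*k) with hr
  set S : Finset (Fin d → ℤ) :=
    Fintype.piFinset (fun _ : Fin d => Finset.Icc (-(r : ℤ)) r) with hS
  set P : (Fin k → Fin (2*d)) → Prop := fun s => (∑ i, srwStep d (s i)) ∈ S with hP
  have hGB : (Finset.univ.filter P).card + (Finset.univ.filter (fun s => ¬ P s)).card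
      = (2*d)^k := by
    rw [Finset.card_filter_add_card_filter_not, Finset.card_univ]
    simp
  set G := (Finset.univ.filter P).card with hG
  set B := (Finset.univ.filter (fun s => ¬ P s)).card with hB
  -- each bad sequence has squared norm ≥ 2k+1
  have hbadsq : ∀ s ∈ Finset.univ.filter (fun s => ¬ P s),
      (2*(k:ℤ)+1) ≤ ∑ c : Fin d, (∑ i, srwStep d (s i) c) ^ 2 := by
    intro s hs
    have hns : ¬ P s := (Finset.mem_filter.mp hs).2
    simp only [hP, hS, Fintype.mem_piFinset] at hns
    push_neg at hns
    obtain ⟨c, hc⟩ := hns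
    rw [Finset.mem_Icc] at hc
    push_neg at hc
    have habs : (r : ℤ) + 1 ≤ |(∑ i, srwStep d (s i)) c| := by
      rcases le_or_gt (-(r:ℤ)) ((∑ i, srwStep d (s i)) c) with h | h
      · have := hc h
        rw [abs_of_pos (by omega)]; omega
      · rw [abs_of_neg (by omega)]; omega
    have hsq : ((r : ℤ) + 1)^2 ≤ ((∑ i, srwStep d (s i)) c)^2 := by
      rw [← sq_abs ((∑ i, srwStep d (s i)) c)]
      exact pow_le_pow_left₀ (by positivity) habs 2
    have h2k : (2*(k:ℤ)+1) ≤ ((r:ℤ)+1)^2 := by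
      have := Nat.lt_succ_sqrt' (2*k)
      have : (2*k : ℤ) < ((r+1 : ℕ) : ℤ)^2 := by exact_mod_cast this
      push_cast at this
      omega
    have hle : ((∑ i, srwStep d (s i)) c)^2 ≤ ∑ c : Fin d, (∑ i, srwStep d (s i) c) ^ 2 := by
      have : ((∑ i, srwStep d (s i)) c)^2 = (∑ i, srwStep d (s i) c) ^ 2 := by
        simp [Finset.sum_apply]
      rw [this]
      exact Finset.single_le_sum (f := fun c => (∑ i, srwStep d (s i) c) ^ 2)
        (fun c _ => sq_nonneg _) (Finset.mem_univ c)
    omega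
  have hBad : (2*(k:ℤ)+1) * B ≤ (k:ℤ) * (2*d)^k := by
    calc (2*(k:ℤ)+1) * B = ∑ _s ∈ Finset.univ.filter (fun s => ¬ P s), (2*(k:ℤ)+1) := by
          rw [Finset.sum_const, hB]; ring
      _ ≤ ∑ s ∈ Finset.univ.filter (fun s => ¬ P s),
            ∑ c : Fin d, (∑ i, srwStep d (s i) c) ^ 2 := Finset.sum_le_sum hbadsq
      _ ≤ ∑ s : Fin k → Fin (2*d), ∑ c : Fin d, (∑ i, srwStep d (s i) c) ^ 2 :=
          Finset.sum_le_sum_of_subset_of_nonneg (Finset.filter_subset _ _)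
            (fun s _ _ => Finset.sum_nonneg fun c _ => sq_nonneg _)
      _ = (k:ℤ) * (2*d)^k := sum_sq_pos d k
  have hsum : ∑ x ∈ S, pathCount d k x = G := (partition_count d k S).symm
  rw [hsum]
  have hcast : (G : ℤ) + B = (2*d)^k := by exact_mod_cast hGB
  have hBnn : (0:ℤ) ≤ B := Int.ofNat_nonneg B
  have : ((2*d)^k : ℤ) ≤ 2 * G := by nlinarith [hBad, hcast, hBnn]
  exact_mod_cast this

end SRW

namespace SRW

lemma append_sum (d a b : ℕ) (s : Fin a → Fin (2*d)) (u : Fin b → Fin (2*d)) :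
    ∑ i : Fin (a+b), srwStep d (Fin.append s u i)
      = (∑ i, srwStep d (s i)) + ∑ i, srwStep d (u i) := by
  rw [Fin.sum_univ_add]
  congr 1
  · exact Finset.sum_congr rfl fun i _ => by rw [Fin.append_left]
  · exact Finset.sum_congr rfl fun i _ => by rw [Fin.append_right]

lemma append_inj (d a b : ℕ) : Function.Injective
    (fun p : (Fin a → Fin (2*d)) × (Fin b → Fin (2*d)) => Fin.append p.1 p.2) := by
  intro p q h
  have h1 : p.1 = q.1 := by
    funext i
    have := congrFun h (Fin.castAdd b i)
    simp only [] at this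
    rwa [Fin.append_left, Fin.append_left] at this
  have h2 : p.2 = q.2 := by
    funext i
    have := congrFun h (Fin.natAdd a i)
    simp only [] at this
    rwa [Fin.append_right, Fin.append_right] at this
  exact Prod.ext h1 h2

lemma ck_sum (d a b : ℕ) (z : Fin d → ℤ) (S : Finset (Fin d → ℤ)) :
    ∑ x ∈ S, pathCount d a x * pathCount d b (z - x) ≤ pathCount d (a+b) z := by
  classical
  set φ : (Fin a → Fin (2*d)) × (Fin b → Fin (2*d)) → (Fin (a+b) → Fin (2*d)) :=
    fun p => Fin.append p.1 p.2 with hφ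
  set A : (Fin d → ℤ) → Finset (Fin a → Fin (2*d)) :=
    fun x => Finset.univ.filter (fun s => (∑ i, srwStep d (s i)) = x) with hA
  set B : (Fin d → ℤ) → Finset (Fin b → Fin (2*d)) :=
    fun x => Finset.univ.filter (fun s => (∑ i, srwStep d (s i)) = z - x) with hB
  have key : ∀ x ∈ S, ∀ e ∈ ((A x ×ˢ B x).image φ),
      (∑ i : Fin a, srwStep d (e (Fin.castAdd b i))) = x ∧
      (∑ i : Fin (a+b), srwStep d (e i)) = z := by
    intro x _ e he
    obtain ⟨p, hp, rfl⟩ := Finset.mem_image.mp he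
    obtain ⟨hp1, hp2⟩ := Finset.mem_product.mp hp
    simp only [hA, Finset.mem_filter] at hp1
    simp only [hB, Finset.mem_filter] at hp2
    constructor
    · have : ∀ i : Fin a, φ p (Fin.castAdd b i) = p.1 i := fun i => Fin.append_left _ _ i
      rw [Finset.sum_congr rfl fun i _ => by rw [this i]]
      exact hp1.2
    · rw [hφ]
      simp only
      rw [append_sum, hp1.2, hp2.2]
      abel
  have hdisj : ∀ x ∈ S, ∀ y ∈ S, x ≠ y →
      Disjoint ((A x ×ˢ B x).image φ) ((A y ×ˢ B y).image φ) := by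
    intro x hx y hy hxy
    rw [Finset.disjoint_left]
    intro e hex hey
    exact hxy (((key x hx e hex).1.symm).trans (key y hy e hey).1)
  have hsub : S.biUnion (fun x => (A x ×ˢ B x).image φ) ⊆
      Finset.univ.filter (fun e : Fin (a+b) → Fin (2*d) => (∑ i, srwStep d (e i)) = z) := by
    intro e he
    obtain ⟨x, hx, he'⟩ := Finset.mem_biUnion.mp he
    simp only [Finset.mem_filter, Finset.mem_univ, true_and]
    exact (key x hx e he').2
  calc ∑ x ∈ S, pathCount d a x * pathCount d b (z - x)
      = ∑ x ∈ S, ((A x ×ˢ B x).image φ).card := by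
        apply Finset.sum_congr rfl
        intro x _
        rw [Finset.card_image_of_injective _ (append_inj d a b), Finset.card_product]
        rfl
    _ = (S.biUnion (fun x => (A x ×ˢ B x).image φ)).card := (Finset.card_biUnion hdisj).symm
    _ ≤ pathCount d (a+b) z := Finset.card_le_card hsub

lemma ck_single (d a b : ℕ) (x y : Fin d → ℤ) :
    pathCount d a x * pathCount d b y ≤ pathCount d (a+b) (x+y) := by
  have := ck_sum d a b (x+y) {x}
  simpa using this

end SRW

namespace SRW

def negStep (d : ℕ) (j : Fin (2*d)) : Fin (2*d) :=
  if h : j.val < d then ⟨j.val + d, by omega⟩ else ⟨j.val - d, by omega⟩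

lemma negStep_step (d : ℕ) (j : Fin (2*d)) : srwStep d (negStep d j) = - srwStep d j := by
  funext c
  have hc : c.val < d := c.isLt
  have hj : j.val < 2*d := j.isLt
  by_cases h : j.val < d
  · have e1 : negStep d j = ⟨j.val + d, by omega⟩ := dif_pos h
    rw [e1]
    simp only [srwStep, Pi.neg_apply]
    rw [if_neg (show ¬ (j.val + d < d) by omega), if_pos h]
    have he : j.val + d = d + c.val ↔ j.val = c.val := by omega
    rw [if_congr he rfl rfl]
    split_ifs <;> ring
  · have e1 : negStep d j = ⟨j.val - d, by omega⟩ := dif_neg h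
    rw [e1]
    simp only [srwStep, Pi.neg_apply]
    rw [if_pos (show j.val - d < d by omega), if_neg h]
    have he : j.val - d = c.val ↔ j.val = d + c.val := by omega
    rw [if_congr he rfl rfl]
    split_ifs <;> ring

lemma negStep_invol (d : ℕ) (j : Fin (2*d)) : negStep d (negStep d j) = j := by
  have hj : j.val < 2*d := j.isLt
  by_cases h : j.val < d
  · have e1 : negStep d j = ⟨j.val + d, by omega⟩ := dif_pos h
    rw [e1]
    have e2 : negStep d ⟨j.val + d, by omega⟩ = ⟨j.val + d - d, by omega⟩ :=
      dif_neg (show ¬ (j.val + d < d) by omega)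
    rw [e2]
    apply Fin.ext
    show j.val + d - d = j.val
    omega
  · have e1 : negStep d j = ⟨j.val - d, by omega⟩ := dif_neg h
    rw [e1]
    have e2 : negStep d ⟨j.val - d, by omega⟩ = ⟨j.val - d + d, by omega⟩ :=
      dif_pos (show j.val - d < d by omega)
    rw [e2]
    apply Fin.ext
    show j.val - d + d = j.val
    omega

lemma pathCount_neg (d k : ℕ) (x : Fin d → ℤ) : pathCount d k (-x) = pathCount d k x := by
  classical
  unfold pathCount
  apply Finset.card_bij' (fun s _ => negStep d ∘ s) (fun s _ => negStep d ∘ s)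
  · intro s hs
    simp only [Finset.mem_filter, Finset.mem_univ, true_and] at hs ⊢
    have : ∀ i, srwStep d ((negStep d ∘ s) i) = - srwStep d (s i) :=
      fun i => negStep_step d (s i)
    rw [Finset.sum_congr rfl fun i _ => this i, Finset.sum_neg_distrib, hs, neg_neg]
  · intro s hs
    simp only [Finset.mem_filter, Finset.mem_univ, true_and] at hs ⊢
    have : ∀ i, srwStep d ((negStep d ∘ s) i) = - srwStep d (s i) :=
      fun i => negStep_step d (s i)
    rw [Finset.sum_congr rfl fun i _ => this i, Finset.sum_neg_distrib, hs]
  · intro s _; funext i; exact negStep_invol d (s i)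
  · intro s _; funext i; exact negStep_invol d (s i)

lemma path_exists (d : ℕ) : ∀ M : ℕ, ∀ x : Fin d → ℤ, (∑ i, |x i|) = M →
    ∃ σ : Fin M → Fin (2*d), ∑ i, srwStep d (σ i) = x := by
  intro M
  induction M with
  | zero =>
    intro x hx
    refine ⟨Fin.elim0, ?_⟩
    have hx0 : (∑ i, |x i|) = 0 := by exact_mod_cast hx
    have hall := (Finset.sum_eq_zero_iff_of_nonneg (fun j _ => abs_nonneg (x j))).mp hx0
    funext c
    have hc := abs_eq_zero.mp (hall c (Finset.mem_univ c))
    rw [Finset.univ_eq_empty, Finset.sum_empty, hc]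
    rfl
  | succ M ih =>
    intro x hx
    have hne : ∃ i₀ : Fin d, x i₀ ≠ 0 := by
      by_contra hall
      push_neg at hall
      have : (∑ i, |x i|) = 0 := Finset.sum_eq_zero fun i _ => by rw [hall i]; simp
      omega
    obtain ⟨i₀, hi₀⟩ := hne
    have hd : i₀.val < d := i₀.isLt
    -- choose the step towards x
    obtain ⟨j, hstep⟩ : ∃ j : Fin (2*d), srwStep d j =
        (fun c => if i₀.val = c.val then (if 0 < x i₀ then 1 else -1) else 0) := by
      by_cases hpos : 0 < x i₀
      · refine ⟨⟨i₀.val, by omega⟩, ?_⟩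
        funext c
        simp only [srwStep, if_pos hd, if_pos hpos]
      · refine ⟨⟨d + i₀.val, by omega⟩, ?_⟩
        funext c
        simp only [srwStep, if_neg (by omega : ¬ (d + i₀.val < d)), if_neg hpos]
        have : d + i₀.val = d + c.val ↔ i₀.val = c.val := by omega
        simp [this]
    set x' : Fin d → ℤ := x - srwStep d j with hx'
    have hsum' : (∑ i, |x' i|) = M := by
      have hterm : ∀ i : Fin d, |x i| - |x' i| = if i = i₀ then 1 else 0 := by
        intro i
        rw [hx']
        simp only [Pi.sub_apply, hstep]
        by_cases hii : i = i₀
        · subst hii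
          rw [if_pos rfl, if_pos rfl]
          by_cases hpos : 0 < x i
          · rw [if_pos hpos, abs_of_pos hpos, abs_of_nonneg (by omega)]
            ring
          · have hneg : x i < 0 := lt_of_le_of_ne (not_lt.mp hpos) hi₀
            rw [if_neg hpos, abs_of_neg hneg, abs_of_nonpos (by omega)]
            ring
        · rw [if_neg hii, if_neg (fun h => hii (Fin.ext h.symm)), sub_zero, sub_self]
      have : (∑ i, |x i|) - (∑ i, |x' i|) = 1 := by
        rw [← Finset.sum_sub_distrib]
        rw [Finset.sum_congr rfl fun i _ => hterm i]
        simp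
      omega
    obtain ⟨σ', hσ'⟩ := ih x' hsum'
    refine ⟨Fin.cons j σ', ?_⟩
    rw [Fin.sum_univ_succ]
    simp only [Fin.cons_zero, Fin.cons_succ]
    rw [hσ', hx']
    abel

lemma pathCount_self_pos (d : ℕ) (x : Fin d → ℤ) (M : ℕ) (hM : (∑ i, |x i|) = M) :
    1 ≤ pathCount d M x := by
  obtain ⟨σ, hσ⟩ := path_exists d M x hM
  rw [Nat.one_le_iff_ne_zero, ← Nat.pos_iff_ne_zero]
  apply Finset.card_pos.mpr
  exact ⟨σ, Finset.mem_filter.mpr ⟨Finset.mem_univ _, hσ⟩⟩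

end SRW
namespace SRW

lemma nstepProb_eq (d n : ℕ) (x : Fin d → ℤ) :
    nstepProb d n x = (pathCount d n x : ℝ) / (2 * d : ℝ) ^ n := rfl

lemma nstepProb_nonneg (d n : ℕ) (x : Fin d → ℤ) : 0 ≤ nstepProb d n x := by
  rw [nstepProb_eq]; positivity

lemma pathCount_le (d n : ℕ) (x : Fin d → ℤ) : pathCount d n x ≤ (2*d)^n := by
  calc pathCount d n x ≤ (Finset.univ : Finset (Fin n → Fin (2*d))).card :=
        Finset.card_filter_le _ _
    _ = (2*d)^n := by rw [Finset.card_univ]; simp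

lemma nstepProb_le_one (d n : ℕ) (hd : 1 ≤ d) (x : Fin d → ℤ) : nstepProb d n x ≤ 1 := by
  rw [nstepProb_eq, div_le_one (by positivity)]
  have := pathCount_le d n x
  calc (pathCount d n x : ℝ) ≤ ((2*d)^n : ℕ) := by exact_mod_cast this
    _ = (2*d : ℝ)^n := by push_cast; ring

lemma sqrt_k_ge_one {k : ℕ} (hk : 1 ≤ k) : 1 ≤ Real.sqrt k := by
  rw [show (1:ℝ) = Real.sqrt 1 by simp]
  exact Real.sqrt_le_sqrt (by exact_mod_cast hk)

lemma return_lower (d k : ℕ) (hd : 1 ≤ d) (hk : 1 ≤ k) :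
    ((4:ℝ) * (4 * Real.sqrt k)^d)⁻¹ ≤ nstepProb d (2*k) 0 := by
  classical
  set r : ℕ := Nat.sqrt (2*k) with hr
  set S : Finset (Fin d → ℤ) :=
    Fintype.piFinset (fun _ : Fin d => Finset.Icc (-(r : ℤ)) r) with hS
  -- Markov bound
  have h1 : ((2*d:ℝ))^k ≤ 2 * ∑ x ∈ S, (pathCount d k x : ℝ) := by
    have := markov_bound d k
    have : ((2*d)^k : ℕ) ≤ ((2 * ∑ x ∈ S, pathCount d k x : ℕ)) := this
    calc ((2*d:ℝ))^k = (((2*d)^k : ℕ) : ℝ) := by push_cast; ring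
      _ ≤ ((2 * ∑ x ∈ S, pathCount d k x : ℕ) : ℝ) := by exact_mod_cast this
      _ = 2 * ∑ x ∈ S, (pathCount d k x : ℝ) := by push_cast; ring
  -- Chapman-Kolmogorov + symmetry
  have h2 : ∑ x ∈ S, (pathCount d k x : ℝ)^2 ≤ (pathCount d (2*k) 0 : ℝ) := by
    have hck := ck_sum d k k 0 S
    have heq : ∀ x ∈ S, pathCount d k x * pathCount d k (0 - x) = pathCount d k x ^ 2 := by
      intro x _
      rw [zero_sub, pathCount_neg, sq]
    rw [Finset.sum_congr rfl heq] at hck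
    have hck2 : ∑ x ∈ S, pathCount d k x ^ 2 ≤ pathCount d (2*k) 0 := by
      rwa [pathCount_congr d (by ring : k + k = 2*k)] at hck
    calc ∑ x ∈ S, (pathCount d k x : ℝ)^2 = ((∑ x ∈ S, pathCount d k x ^ 2 : ℕ) : ℝ) := by
          push_cast; ring
      _ ≤ _ := by exact_mod_cast hck2
  -- Cauchy-Schwarz
  have h3 : (∑ x ∈ S, (pathCount d k x : ℝ))^2
      ≤ (S.card : ℝ) * ∑ x ∈ S, (pathCount d k x : ℝ)^2 := by
    have := Finset.sum_mul_sq_le_sq_mul_sq S (fun _ => (1:ℝ)) (fun x => (pathCount d k x : ℝ))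
    simpa using this
  -- cardinality of the box
  have h4 : (S.card : ℝ) ≤ (4 * Real.sqrt k)^d := by
    have hcard : S.card = (2*r+1)^d := by
      rw [hS, Fintype.card_piFinset]
      have h5 : (Finset.Icc (-(r : ℤ)) (r:ℤ)).card = 2*r+1 := by
        rw [Int.card_Icc]; omega
      simp [h5]
    rw [hcard]
    have hrk : ((2*r+1 : ℕ) : ℝ) ≤ 4 * Real.sqrt k := by
      have hr2 : ((r:ℝ))^2 ≤ 2*(k:ℝ) := by
        have h6 := Nat.sqrt_le' (2*k)
        have h7 : ((r^2 : ℕ) : ℝ) ≤ ((2*k : ℕ) : ℝ) := by exact_mod_cast h6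
        push_cast at h7
        linarith
      have hrle : (r:ℝ) ≤ Real.sqrt 2 * Real.sqrt k := by
        rw [← Real.sqrt_mul (by norm_num : (0:ℝ) ≤ 2)]
        have h8 : (r:ℝ) = Real.sqrt ((r:ℝ)^2) := (Real.sqrt_sq (by positivity)).symm
        rw [h8]
        exact Real.sqrt_le_sqrt hr2
      have hs2 : Real.sqrt 2 ≤ 1.5 := by
        rw [show (1.5:ℝ) = Real.sqrt (1.5^2) by rw [Real.sqrt_sq]; norm_num]
        exact Real.sqrt_le_sqrt (by norm_num)
      have hk1 : 1 ≤ Real.sqrt k := sqrt_k_ge_one hk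
      push_cast
      nlinarith [Real.sqrt_nonneg (k:ℝ)]
    calc ((2*r+1)^d : ℕ) = (((2*r+1 : ℕ):ℝ))^d := by push_cast; ring
      _ ≤ (4 * Real.sqrt k)^d := pow_le_pow_left₀ (by positivity) hrk d
  -- combine
  have hpos : (0:ℝ) < (2*d:ℝ)^(2*k) := by positivity
  have hcs : (0:ℝ) < 4 * (4 * Real.sqrt k)^d := by
    have := sqrt_k_ge_one hk
    positivity
  rw [nstepProb_eq, le_div_iff₀ hpos, ← sub_nonneg]
  have key : ((2*d:ℝ))^(2*k) ≤ 4 * (4 * Real.sqrt k)^d * (pathCount d (2*k) 0 : ℝ) := by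
    have hA : 0 ≤ ∑ x ∈ S, (pathCount d k x : ℝ) :=
      Finset.sum_nonneg fun x _ => by positivity
    have e1 : ((2*d:ℝ))^(2*k) = ((2*d:ℝ)^k)^2 := by rw [mul_comm 2 k, pow_mul]
    rw [e1]
    calc ((2*d:ℝ)^k)^2 ≤ (2 * ∑ x ∈ S, (pathCount d k x : ℝ))^2 := by
          apply pow_le_pow_left₀ (by positivity) h1
      _ = 4 * (∑ x ∈ S, (pathCount d k x : ℝ))^2 := by ring
      _ ≤ 4 * ((S.card : ℝ) * ∑ x ∈ S, (pathCount d k x : ℝ)^2) := by linarith [h3]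
      _ ≤ 4 * ((4 * Real.sqrt k)^d * (pathCount d (2*k) 0 : ℝ)) := by
          have hbn : 0 ≤ ∑ x ∈ S, (pathCount d k x : ℝ)^2 :=
            Finset.sum_nonneg fun x _ => sq_nonneg _
          have := mul_le_mul h4 h2 hbn (by positivity)
          linarith
      _ = 4 * (4 * Real.sqrt k)^d * (pathCount d (2*k) 0 : ℝ) := by ring
  have : (4 * (4 * Real.sqrt k)^d)⁻¹ * (2*d:ℝ)^(2*k) ≤ (pathCount d (2*k) 0 : ℝ) := by
    rw [inv_mul_le_iff₀ hcs]
    exact key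
  linarith

end SRW

namespace SRW

lemma factorial_le (n : ℕ) (hn : 1 ≤ n) :
    (n.factorial : ℝ) ≤ Real.exp 1 * Real.sqrt n * ((n:ℝ)/Real.exp 1)^n := by
  obtain ⟨m, rfl⟩ : ∃ m, n = m + 1 := ⟨n - 1, by omega⟩
  have hmono := Stirling.log_stirlingSeq'_antitone (show 0 ≤ m by omega)
  simp only [Function.comp] at hmono
  have h1 : Stirling.stirlingSeq (m+1) ≤ Stirling.stirlingSeq 1 := by
    have hp1 := Stirling.stirlingSeq'_pos m
    have hp0 := Stirling.stirlingSeq'_pos 0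
    rw [← Real.exp_log hp1, ← Real.exp_log hp0]
    exact Real.exp_le_exp.mpr hmono
  rw [Stirling.stirlingSeq_one] at h1
  set n := m + 1
  have hn0 : (0:ℝ) < n := by positivity
  have hden : (0:ℝ) < Real.sqrt (2*n) * ((n:ℝ)/Real.exp 1)^n := by positivity
  have hfac : (n.factorial : ℝ) = Stirling.stirlingSeq n * (Real.sqrt (2*n) * ((n:ℝ)/Real.exp 1)^n) := by
    rw [Stirling.stirlingSeq, div_mul_cancel₀ _ (ne_of_gt hden)]
  rw [hfac]
  have h2 : Real.sqrt (2*(n:ℝ)) = Real.sqrt 2 * Real.sqrt n := Real.sqrt_mul (by norm_num) _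
  calc Stirling.stirlingSeq n * (Real.sqrt (2*n) * ((n:ℝ)/Real.exp 1)^n)
      ≤ (Real.exp 1 / Real.sqrt 2) * (Real.sqrt (2*n) * ((n:ℝ)/Real.exp 1)^n) := by
        apply mul_le_mul_of_nonneg_right h1 (le_of_lt hden)
    _ = Real.exp 1 * Real.sqrt n * ((n:ℝ)/Real.exp 1)^n := by
        rw [h2]
        have hs2 : Real.sqrt 2 ≠ 0 := by positivity
        field_simp
  
lemma pois_lower (t : ℝ) (n : ℕ) (ht : 16 ≤ t) (h1 : t ≤ n)
    (h2 : (n:ℝ) ≤ t + 2*Real.sqrt t + 2) :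
    Real.exp (-8) / Real.sqrt t ≤ Real.exp (-t) * t^n / n.factorial := by
  have ht0 : (0:ℝ) < t := by linarith
  have hst : (4:ℝ) ≤ Real.sqrt t := by
    rw [show (4:ℝ) = Real.sqrt 16 by
      rw [show (16:ℝ) = 4^2 by norm_num, Real.sqrt_sq (by norm_num : (0:ℝ) ≤ 4)]]
    exact Real.sqrt_le_sqrt ht
  have hst0 : (0:ℝ) < Real.sqrt t := by linarith
  have hsq : Real.sqrt t ^ 2 = t := Real.sq_sqrt (le_of_lt ht0)
  have hn0 : (0:ℝ) < n := lt_of_lt_of_le ht0 h1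
  have hnn : 1 ≤ n := by exact_mod_cast (by linarith : (1:ℝ) ≤ (n:ℝ))
  have hn2t : (n:ℝ) ≤ 2*t := by nlinarith
  have hfac := factorial_le n hnn
  have hfacpos : (0:ℝ) < n.factorial := by exact_mod_cast Nat.factorial_pos n
  have hbpos : (0:ℝ) < Real.exp 1 * Real.sqrt n * ((n:ℝ)/Real.exp 1)^n := by positivity
  have step1 : Real.exp (-t) * t^n / (Real.exp 1 * Real.sqrt n * ((n:ℝ)/Real.exp 1)^n)
      ≤ Real.exp (-t) * t^n / n.factorial := by
    gcongr
  refine le_trans ?_ step1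
  rw [div_le_div_iff₀ hst0 hbpos]
  have hlog : ((n:ℝ)/t)^n ≤ Real.exp ((n:ℝ) - t + 25/4) := by
    have hpos : (0:ℝ) < (n:ℝ)/t := by positivity
    rw [← Real.exp_log (pow_pos hpos n), Real.exp_le_exp, Real.log_pow]
    have hl : Real.log ((n:ℝ)/t) ≤ ((n:ℝ) - t)/t := by
      have hle := Real.log_le_sub_one_of_pos hpos
      have he : (n:ℝ)/t - 1 = ((n:ℝ)-t)/t := by field_simp
      linarith [he ▸ hle]
    have hmul : (n:ℝ) * Real.log ((n:ℝ)/t) ≤ (n:ℝ) * (((n:ℝ) - t)/t) :=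
      mul_le_mul_of_nonneg_left hl (le_of_lt hn0)
    have h9 : (n:ℝ)*(((n:ℝ)-t)/t) = ((n:ℝ)-t) + ((n:ℝ)-t)^2/t := by field_simp; ring
    have h10 : ((n:ℝ)-t)^2 ≤ (25/4)*t := by nlinarith
    have h11 : ((n:ℝ)-t)^2/t ≤ 25/4 := by rw [div_le_iff₀ ht0]; linarith
    rw [h9] at hmul
    linarith
  have e1 : ((n:ℝ)/Real.exp 1)^n = ((n:ℝ)/t)^n * (t/Real.exp 1)^n := by
    rw [← mul_pow]
    congr 1
    field_simp
  have e2 : (t/Real.exp 1)^n = t^n / Real.exp n := by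
    rw [div_pow, Real.exp_one_pow]
  have hsn : Real.sqrt n ≤ Real.exp (3/4) * Real.sqrt t := by
    have ha : Real.sqrt n ≤ Real.sqrt (2*t) := Real.sqrt_le_sqrt hn2t
    rw [Real.sqrt_mul (by norm_num : (0:ℝ) ≤ 2)] at ha
    have hs2 : Real.sqrt 2 ≤ 1.5 := by
      rw [show (1.5:ℝ) = Real.sqrt (1.5^2) by
        rw [Real.sqrt_sq (by norm_num : (0:ℝ) ≤ 1.5)]]
      exact Real.sqrt_le_sqrt (by norm_num)
    have hb : (1.75:ℝ) ≤ Real.exp (3/4) := by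
      have := Real.add_one_le_exp (3/4:ℝ)
      linarith
    nlinarith [Real.sqrt_nonneg t]
  calc Real.exp (-8) * (Real.exp 1 * Real.sqrt n * ((n:ℝ)/Real.exp 1)^n)
      = Real.sqrt n * (((n:ℝ)/t)^n * (Real.exp (-8) * Real.exp 1 * (t^n/Real.exp n))) := by
        rw [e1, e2]; ring
    _ ≤ Real.sqrt n * (Real.exp ((n:ℝ) - t + 25/4) * (Real.exp (-8) * Real.exp 1 * (t^n/Real.exp n))) := by
        apply mul_le_mul_of_nonneg_left _ (Real.sqrt_nonneg _)
        apply mul_le_mul_of_nonneg_right hlog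
        positivity
    _ = Real.sqrt n * Real.exp (-t - 3/4) * t^n := by
        have eexp : Real.exp ((n:ℝ) - t + 25/4) * (Real.exp (-8) * Real.exp 1 / Real.exp (n:ℝ))
            = Real.exp (-t - 3/4) := by
          rw [div_eq_mul_inv (Real.exp (-8) * Real.exp 1) (Real.exp (n:ℝ)), ← Real.exp_neg,
            ← Real.exp_add, ← Real.exp_add, ← Real.exp_add]
          congr 1
          ring
        rw [show Real.exp ((n:ℝ) - t + 25/4) * (Real.exp (-8) * Real.exp 1 * (t^n/Real.exp (n:ℝ)))
            = (Real.exp ((n:ℝ) - t + 25/4) * (Real.exp (-8) * Real.exp 1 / Real.exp (n:ℝ))) * t^n by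
          ring, eexp]
        ring
    _ ≤ (Real.exp (3/4) * Real.sqrt t) * Real.exp (-t - 3/4) * t^n := by
        apply mul_le_mul_of_nonneg_right _ (by positivity)
        exact mul_le_mul_of_nonneg_right hsn (by positivity)
    _ = Real.exp (-t) * t^n * Real.sqrt t := by
        rw [show Real.exp (3/4) * Real.sqrt t * Real.exp (-t - 3/4)
            = Real.sqrt t * (Real.exp (3/4) * Real.exp (-t - 3/4)) by ring,
          ← Real.exp_add]
        rw [show (3/4:ℝ) + (-t - 3/4) = -t by ring]
        ring

end SRW

namespace SRW

lemma term_nonneg (d : ℕ) (t : ℝ) (ht : 0 < t) (x : Fin d → ℤ) (n : ℕ) :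
    0 ≤ Real.exp (-t) * t ^ n / (n.factorial : ℝ) * nstepProb d n x := by
  have := nstepProb_nonneg d n x
  positivity

lemma summable_terms (d : ℕ) (hd : 1 ≤ d) (t : ℝ) (ht : 0 < t) (x : Fin d → ℤ) :
    Summable (fun n : ℕ => Real.exp (-t) * t ^ n / (n.factorial : ℝ) * nstepProb d n x) := by
  apply Summable.of_nonneg_of_le (fun n => term_nonneg d t ht x n)
    (g := fun n => Real.exp (-t) * t ^ n / (n.factorial : ℝ) * nstepProb d n x)
    (f := fun n => Real.exp (-t) * (t ^ n / (n.factorial : ℝ)))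
  · intro n
    have h1 := nstepProb_le_one d n hd x
    have h2 : (0:ℝ) ≤ Real.exp (-t) * t ^ n / (n.factorial : ℝ) := by positivity
    calc Real.exp (-t) * t ^ n / (n.factorial : ℝ) * nstepProb d n x
        ≤ Real.exp (-t) * t ^ n / (n.factorial : ℝ) * 1 := mul_le_mul_of_nonneg_left h1 h2
      _ = Real.exp (-t) * (t ^ n / (n.factorial : ℝ)) := by ring
  · exact (Real.summable_pow_div_factorial t).mul_left _

lemma ctKernel_ge_single (d : ℕ) (hd : 1 ≤ d) (t : ℝ) (ht : 0 < t) (x : Fin d → ℤ) (n : ℕ) :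
    Real.exp (-t) * t ^ n / (n.factorial : ℝ) * nstepProb d n x ≤ ctKernel d t x :=
  (summable_terms d hd t ht x).le_tsum n (fun j _ => term_nonneg d t ht x j)

lemma ctKernel_ge_sum (d : ℕ) (hd : 1 ≤ d) (t : ℝ) (ht : 0 < t) (x : Fin d → ℤ)
    (F : Finset ℕ) :
    ∑ n ∈ F, Real.exp (-t) * t ^ n / (n.factorial : ℝ) * nstepProb d n x ≤ ctKernel d t x :=
  (summable_terms d hd t ht x).sum_le_tsum F (fun j _ => term_nonneg d t ht x j)

lemma nstepProb_splice (d m k : ℕ) (hd : 1 ≤ d) (x : Fin d → ℤ)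
    (hm : (∑ i, |x i|) = (m:ℤ)) :
    nstepProb d (2*k) 0 / (2*d:ℝ)^m ≤ nstepProb d (m + 2*k) x := by
  have h1 : pathCount d (2*k) 0 ≤ pathCount d (m + 2*k) x := by
    have h2 := ck_single d m (2*k) x 0
    have h3 := pathCount_self_pos d x m hm
    have h4 : pathCount d m x * pathCount d (2*k) 0 ≤ pathCount d (m + 2*k) x := by
      simpa using h2
    nlinarith [h4, h3, Nat.zero_le (pathCount d (2*k) 0)]
  rw [nstepProb_eq, nstepProb_eq]
  rw [div_div, ← pow_add, show 2*k + m = m + 2*k by ring]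
  have h5 : ((pathCount d (2*k) 0 : ℕ) : ℝ) ≤ ((pathCount d (m + 2*k) x : ℕ) : ℝ) := by
    exact_mod_cast h1
  gcongr

end SRW

open SRW in
set_option maxHeartbeats 1000000 in
/-- There is `C > 0` with `p_t(x) ≥ C (1+t)^{-d/2} (2d)^{-‖x‖₁}` for all `t > 0`
and all `x ∈ ℤ^d` with `‖x‖₁ ≤ t/2`. -/
theorem ctKernel_lower_bound (d : ℕ) (hd : 1 ≤ d) :
    ∃ C > 0, ∀ t : ℝ, 0 < t → ∀ x : Fin d → ℤ,
      ((∑ i, |x i| : ℤ) : ℝ) ≤ t / 2 →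
      C * (1 + t) ^ (-(d : ℝ) / 2) * (2 * d : ℝ) ^ (-((∑ i, |x i| : ℤ) : ℝ))
        ≤ ctKernel d t x := by
  classical
  refine ⟨Real.exp (-16) / 4 * ((32:ℝ)^d)⁻¹, by positivity, ?_⟩
  set C := Real.exp (-16) / 4 * ((32:ℝ)^d)⁻¹ with hC
  have hCpos : 0 < C := by rw [hC]; positivity
  intro t ht x hx
  have hMnn : (0:ℤ) ≤ ∑ i, |x i| := Finset.sum_nonneg fun i _ => abs_nonneg _
  set m : ℕ := (∑ i, |x i|).toNat with hmdef
  have hmz : (∑ i, |x i|) = (m:ℤ) := (Int.toNat_of_nonneg hMnn).symm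
  have hmr : ((∑ i, |x i| : ℤ) : ℝ) = (m:ℝ) := by rw [hmz]; push_cast; ring
  rw [hmr] at hx ⊢
  have hdR : (1:ℝ) ≤ (d:ℝ) := by exact_mod_cast hd
  have h2d : (0:ℝ) < 2*(d:ℝ) := by linarith
  have hpow : (2 * (d:ℝ)) ^ (-(m:ℝ)) = ((2*(d:ℝ))^m)⁻¹ := by
    rw [Real.rpow_neg (le_of_lt h2d), Real.rpow_natCast]
  rw [hpow]
  have h1t : (0:ℝ) < 1 + t := by linarith
  have hinvp : (0:ℝ) < ((2*(d:ℝ))^m)⁻¹ := by positivity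
  have hmnn : (0:ℝ) ≤ (m:ℝ) := Nat.cast_nonneg m
  by_cases hts : t ≤ 16
  · -- small times: use the single term n = m
    have key := ctKernel_ge_single d hd t ht x m
    have hp : ((2*(d:ℝ))^m)⁻¹ ≤ nstepProb d m x := by
      rw [nstepProb_eq, inv_eq_one_div]
      have h6 : (1:ℝ) ≤ (pathCount d m x : ℝ) := by
        exact_mod_cast pathCount_self_pos d x m hmz
      gcongr
    have hfm : (m.factorial : ℝ) ≤ t^m := by
      have hmt : (m:ℝ) ≤ t := by linarith
      calc (m.factorial : ℝ) ≤ ((m^m : ℕ) : ℝ) := by exact_mod_cast Nat.factorial_le_pow m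
        _ = ((m:ℝ))^m := by push_cast; ring
        _ ≤ t^m := pow_le_pow_left₀ (by positivity) hmt m
    have hfp : (0:ℝ) < (m.factorial:ℝ) := by exact_mod_cast m.factorial_pos
    have h7 : (1:ℝ) ≤ t^m / m.factorial := by rw [le_div_iff₀ hfp]; linarith
    have h8 : Real.exp (-16) ≤ Real.exp (-t) := Real.exp_le_exp.mpr (by linarith)
    have hterm : Real.exp (-16) * ((2*(d:ℝ))^m)⁻¹
        ≤ Real.exp (-t) * t^m / (m.factorial : ℝ) * nstepProb d m x := by
      calc Real.exp (-16) * ((2*(d:ℝ))^m)⁻¹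
          ≤ Real.exp (-t) * (1 * ((2*(d:ℝ))^m)⁻¹) := by
            rw [one_mul]
            exact mul_le_mul_of_nonneg_right h8 (le_of_lt hinvp)
        _ ≤ Real.exp (-t) * ((t^m / m.factorial) * nstepProb d m x) := by
            apply mul_le_mul_of_nonneg_left _ (by positivity)
            exact mul_le_mul h7 hp (le_of_lt hinvp) (by positivity)
        _ = Real.exp (-t) * t^m / (m.factorial : ℝ) * nstepProb d m x := by ring
    have hC1 : C * (1+t) ^ (-(d:ℝ)/2) ≤ Real.exp (-16) := by
      have h9 : (1+t)^(-(d:ℝ)/2) ≤ 1 :=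
        Real.rpow_le_one_of_one_le_of_nonpos (by linarith) (by
          have : (0:ℝ) ≤ (d:ℝ) := Nat.cast_nonneg d
          linarith)
      have hC2 : C ≤ Real.exp (-16) := by
        rw [hC]
        have h10 : ((32:ℝ)^d)⁻¹ ≤ 1 := by
          rw [inv_le_one_iff₀]
          right
          exact one_le_pow₀ (by norm_num)
        nlinarith [Real.exp_pos (-16:ℝ)]
      calc C * (1+t)^(-(d:ℝ)/2) ≤ C * 1 :=
            mul_le_mul_of_nonneg_left h9 (le_of_lt hCpos)
        _ = C := mul_one C
        _ ≤ Real.exp (-16) := hC2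
    calc C * (1+t)^(-(d:ℝ)/2) * ((2*(d:ℝ))^m)⁻¹
        ≤ Real.exp (-16) * ((2*(d:ℝ))^m)⁻¹ :=
          mul_le_mul_of_nonneg_right hC1 (le_of_lt hinvp)
      _ ≤ _ := le_trans hterm key
  · -- large times
    push_neg at hts
    have ht16 : 16 ≤ t := le_of_lt hts
    have hst : (4:ℝ) ≤ Real.sqrt t := by
      rw [show (4:ℝ) = Real.sqrt 16 by
        rw [show (16:ℝ) = 4^2 by norm_num, Real.sqrt_sq (by norm_num : (0:ℝ) ≤ 4)]]
      exact Real.sqrt_le_sqrt ht16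
    have hst0 : (0:ℝ) < Real.sqrt t := by linarith
    have hsqt : Real.sqrt t * Real.sqrt t = t := Real.mul_self_sqrt (le_of_lt ht)
    set L : ℕ := ⌊Real.sqrt t⌋₊ with hL0
    set k₀ : ℕ := ⌈(t - (m:ℝ))/2⌉₊ with hk₀0
    have htm : (0:ℝ) ≤ (t - (m:ℝ))/2 := by linarith
    have hk₀low : (t - (m:ℝ))/2 ≤ (k₀:ℝ) := Nat.le_ceil _
    have hk₀up : (k₀:ℝ) < (t - (m:ℝ))/2 + 1 := Nat.ceil_lt_add_one htm
    have hL : (L:ℝ) ≤ Real.sqrt t := Nat.floor_le (Real.sqrt_nonneg t)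
    have hL1 : Real.sqrt t < (L:ℝ) + 1 := Nat.lt_floor_add_one _
    -- the per-term lower bound
    have hbound : ∀ k ∈ Finset.Icc k₀ (k₀+L),
        Real.exp (-8)/Real.sqrt t * ((4*(4*Real.sqrt t)^d)⁻¹ * ((2*(d:ℝ))^m)⁻¹)
        ≤ Real.exp (-t) * t^(m+2*k) / (((m+2*k).factorial : ℕ) : ℝ)
            * nstepProb d (m+2*k) x := by
      intro k hk
      obtain ⟨hk1, hk2⟩ := Finset.mem_Icc.mp hk
      have hkR1 : (k₀:ℝ) ≤ (k:ℝ) := by exact_mod_cast hk1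
      have hkR2 : (k:ℝ) ≤ (k₀:ℝ) + (L:ℝ) := by exact_mod_cast hk2
      have hn1 : t ≤ ((m + 2*k : ℕ):ℝ) := by push_cast; linarith
      have hn2 : ((m + 2*k : ℕ):ℝ) ≤ t + 2*Real.sqrt t + 2 := by push_cast; linarith
      have h4t : Real.sqrt t ≤ t/4 := by
        have h41 := mul_le_mul_of_nonneg_right hst (le_of_lt hst0)
        rw [hsqt] at h41
        linarith
      have hkt : (k:ℝ) ≤ t := by linarith
      have hk4 : (4:ℝ) ≤ (k:ℝ) := by linarith
      have hk1' : 1 ≤ k := by exact_mod_cast (by linarith : (1:ℝ) ≤ (k:ℝ))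
      have hkpos : (0:ℝ) < (k:ℝ) := by linarith
      have hA := pois_lower t (m+2*k) ht16 hn1 hn2
      have hB1 : (4*(4*Real.sqrt t)^d)⁻¹ ≤ nstepProb d (2*k) 0 := by
        refine le_trans ?_ (return_lower d k hd hk1')
        have hsk : Real.sqrt (k:ℝ) ≤ Real.sqrt t := Real.sqrt_le_sqrt hkt
        have hskpos : 0 < Real.sqrt (k:ℝ) := Real.sqrt_pos.mpr hkpos
        apply inv_anti₀ (by positivity)
        have : (4*Real.sqrt (k:ℝ))^d ≤ (4*Real.sqrt t)^d :=
          pow_le_pow_left₀ (by positivity) (by linarith) d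
        linarith
      have hB : (4*(4*Real.sqrt t)^d)⁻¹ * ((2*(d:ℝ))^m)⁻¹ ≤ nstepProb d (m+2*k) x := by
        calc (4*(4*Real.sqrt t)^d)⁻¹ * ((2*(d:ℝ))^m)⁻¹
            ≤ nstepProb d (2*k) 0 * ((2*(d:ℝ))^m)⁻¹ :=
              mul_le_mul_of_nonneg_right hB1 (le_of_lt hinvp)
          _ = nstepProb d (2*k) 0 / (2*(d:ℝ))^m := by rw [div_eq_mul_inv]
          _ ≤ nstepProb d (m+2*k) x := by
              have := nstepProb_splice d m k hd x hmz
              convert this using 3 <;> push_cast <;> ring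
      refine mul_le_mul hA hB (by positivity) (by positivity)
    -- sum the terms
    have hcard : (Finset.Icc k₀ (k₀+L)).card = L + 1 := by rw [Nat.card_Icc]; omega
    have hinj : ∀ a ∈ Finset.Icc k₀ (k₀+L), ∀ b ∈ Finset.Icc k₀ (k₀+L),
        m + 2*a = m + 2*b → a = b := by intro a _ b _ h; omega
    have himg : ∑ n ∈ (Finset.Icc k₀ (k₀+L)).image (fun k => m + 2*k),
          Real.exp (-t) * t^n / (n.factorial : ℝ) * nstepProb d n x
        = ∑ k ∈ Finset.Icc k₀ (k₀+L),
          Real.exp (-t) * t^(m+2*k) / (((m+2*k).factorial : ℕ) : ℝ)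
            * nstepProb d (m+2*k) x := Finset.sum_image hinj
    have hsum : ((L:ℝ)+1) * (Real.exp (-8)/Real.sqrt t
          * ((4*(4*Real.sqrt t)^d)⁻¹ * ((2*(d:ℝ))^m)⁻¹))
        ≤ ∑ k ∈ Finset.Icc k₀ (k₀+L),
          Real.exp (-t) * t^(m+2*k) / (((m+2*k).factorial : ℕ) : ℝ)
            * nstepProb d (m+2*k) x := by
      have := Finset.card_nsmul_le_sum (Finset.Icc k₀ (k₀+L)) _ _ hbound
      rw [hcard, nsmul_eq_mul] at this
      push_cast at this ⊢
      exact this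
    -- the main comparison
    have hmain : C * (1+t)^(-(d:ℝ)/2) * ((2*(d:ℝ))^m)⁻¹
        ≤ Real.exp (-8) * ((4*(4*Real.sqrt t)^d)⁻¹ * ((2*(d:ℝ))^m)⁻¹) := by
      rw [show Real.exp (-8) * ((4*(4*Real.sqrt t)^d)⁻¹ * ((2*(d:ℝ))^m)⁻¹)
          = (Real.exp (-8) * (4*(4*Real.sqrt t)^d)⁻¹) * ((2*(d:ℝ))^m)⁻¹ by ring]
      apply mul_le_mul_of_nonneg_right _ (le_of_lt hinvp)
      have hexp : (4*Real.sqrt t)^d = 4^d * t ^ ((d:ℝ)/2) := by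
        rw [mul_pow]
        congr 1
        rw [Real.sqrt_eq_rpow, ← Real.rpow_natCast (t ^ ((1:ℝ)/2)) d,
          ← Real.rpow_mul (le_of_lt ht)]
        congr 1
        ring
      rw [hexp, ← div_eq_mul_inv, le_div_iff₀ (by positivity)]
      rw [neg_div, Real.rpow_neg (le_of_lt h1t)]
      set P := (1+t)^((d:ℝ)/2) with hP0
      set Q := t^((d:ℝ)/2) with hQ0
      have hP : 0 < P := Real.rpow_pos_of_pos h1t _
      have hQle : Q ≤ P := Real.rpow_le_rpow (le_of_lt ht) (by linarith) (by positivity)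
      have hQP : Q * P⁻¹ ≤ 1 := by rw [← div_eq_mul_inv, div_le_one hP]; exact hQle
      have hC4 : C * 4 * 4^d ≤ Real.exp (-8) := by
        rw [hC]
        have h4le : (4:ℝ)^d ≤ 32^d := pow_le_pow_left₀ (by norm_num) (by norm_num) d
        have h32 : (0:ℝ) < (32:ℝ)^d := by positivity
        have hee : Real.exp (-16) ≤ Real.exp (-8) := Real.exp_le_exp.mpr (by norm_num)
        calc Real.exp (-16)/4 * ((32:ℝ)^d)⁻¹ * 4 * 4^d
            = Real.exp (-16) * ((4:ℝ)^d / 32^d) := by field_simp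
          _ ≤ Real.exp (-16) * 1 := by
              apply mul_le_mul_of_nonneg_left _ (le_of_lt (Real.exp_pos _))
              rw [div_le_one h32]; exact h4le
          _ = Real.exp (-16) := mul_one _
          _ ≤ Real.exp (-8) := hee
      calc C * P⁻¹ * (4*(4^d * Q)) = (C * 4 * 4^d) * (Q * P⁻¹) := by ring
        _ ≤ (C * 4 * 4^d) * 1 := by
            apply mul_le_mul_of_nonneg_left hQP
            positivity
        _ = C * 4 * 4^d := mul_one _
        _ ≤ Real.exp (-8) := hC4
    have hsqrtne : Real.sqrt t ≠ 0 := ne_of_gt hst0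
    calc C * (1+t)^(-(d:ℝ)/2) * ((2*(d:ℝ))^m)⁻¹
        ≤ Real.exp (-8) * ((4*(4*Real.sqrt t)^d)⁻¹ * ((2*(d:ℝ))^m)⁻¹) := hmain
      _ = Real.sqrt t * (Real.exp (-8)/Real.sqrt t
            * ((4*(4*Real.sqrt t)^d)⁻¹ * ((2*(d:ℝ))^m)⁻¹)) := by
          field_simp
      _ ≤ ((L:ℝ)+1) * (Real.exp (-8)/Real.sqrt t
            * ((4*(4*Real.sqrt t)^d)⁻¹ * ((2*(d:ℝ))^m)⁻¹)) := by
          apply mul_le_mul_of_nonneg_right (by linarith) (by positivity)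
      _ ≤ ∑ k ∈ Finset.Icc k₀ (k₀+L),
            Real.exp (-t) * t^(m+2*k) / (((m+2*k).factorial : ℕ) : ℝ)
              * nstepProb d (m+2*k) x := hsum
      _ = ∑ n ∈ (Finset.Icc k₀ (k₀+L)).image (fun k => m + 2*k),
            Real.exp (-t) * t^n / (n.factorial : ℝ) * nstepProb d n x := himg.symm
      _ ≤ ctKernel d t x := ctKernel_ge_sum d hd t ht x _
end
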